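/- arXiv:1201.4549 — 2 statements merged into one kernel-verified Lean document; each statement's English description precedes it below -/
import Mathlib

section
/- Let K=K(c) be a symmetric A_{2n-1}-crystal with symmetric extract B, and let v be a self-complementary vertex. Then: (a) for every color i of K, h_i(v)=h_{i'}(v) and t_i(v)=t_{i'}(v); (b) for each i in {1,...,n}, every connected subgraph of (S,E_{ibar}) is a finite directed path, the maximal ibar-colored path of B beginning at v has exactly h_i(v) edges, and the maximal ibar-colored path of B ending at v has exactly t_i(v) edges. -/
open Classical

noncomputable section

/-- Iterate a partial operator `k` times. -/
def optIter {V : Type} (f : V → Option V) : ℕ → V → Option V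
  | 0, v => some v
  | k + 1, v => (f v).bind (optIter f k)

/-- A vertex type together with, for every natural number (color) `i`,
a partial operator whose graph is the set of `i`-edges. -/
structure PreGraph where
  V : Type
  F : ℕ → V → Option V

namespace PreGraph

/-- Partial inverse operator of color `i`. -/
def Finv (K : PreGraph) (i : ℕ) (v : K.V) : Option K.V :=
  if h : ∃ u, K.F i u = some v then some h.choose else none

/-- Number of edges of the maximal `i`-colored path beginning at `v`. -/
def h (K : PreGraph) (i : ℕ) (v : K.V) : ℕ :=
  sSup {k | (optIter (K.F i) k v).isSome = true}

/-- Number of edges of the maximal `i`-colored path ending at `v`. -/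
def t (K : PreGraph) (i : ℕ) (v : K.V) : ℕ :=
  sSup {k | ∃ u, optIter (K.F i) k u = some v}

/-- One (undirected) step along an edge of any color. -/
def Step (K : PreGraph) (u v : K.V) : Prop :=
  ∃ i, K.F i u = some v ∨ K.F i v = some u

/-- Weak connectivity. -/
def Connected (K : PreGraph) : Prop :=
  ∀ u v : K.V, Relation.ReflTransGen K.Step u v

/-- All edges have colors in `C`. -/
def ColorsIn (K : PreGraph) (C : Set ℕ) : Prop :=
  ∀ i ∉ C, ∀ v, K.F i v = none

end PreGraph

/-- `s` has no incoming edges. -/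
def IsSource (K : PreGraph) (s : K.V) : Prop := ∀ i u, K.F i u ≠ some s

/-- `tv` has no outgoing edges. -/
def IsSink (K : PreGraph) (tv : K.V) : Prop := ∀ i, K.F i tv = none

/-- `K` is a (finite) colored graph with colors in `C` satisfying axiom (A1):
every connected monochromatic subgraph is a finite directed path. -/
def IsColored (K : PreGraph) (C : Set ℕ) : Prop :=
  Finite K.V ∧ K.ColorsIn C ∧
  (∀ (i : ℕ) (u u' v : K.V), K.F i u = some v → K.F i u' = some v → u = u') ∧
  (∀ (i : ℕ) (v : K.V) (k : ℕ), 0 < k → optIter (K.F i) k v ≠ some v)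

/-- `|i - j| = 1`. -/
def Neighb (i j : ℕ) : Prop := i + 1 = j ∨ j + 1 = i

/-- `|i - j| ≥ 2`. -/
def Far (i j : ℕ) : Prop := i + 2 ≤ j ∨ j + 2 ≤ i

instance (i j : ℕ) : Decidable (Neighb i j) := by unfold Neighb; infer_instance
instance (i j : ℕ) : Decidable (Far i j) := by unfold Far; infer_instance

/-- Axiom (A2) for the ordered pair of distinct colors `(i, j)`. -/
def A2at (K : PreGraph) (i j : ℕ) : Prop :=
  (∀ u v, K.F i u = some v →
    K.t j v ≤ K.t j u ∧ K.h j u ≤ K.h j v ∧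
    ((K.h j u : ℤ) - (K.t j u : ℤ)) - ((K.h j v : ℤ) - (K.t j v : ℤ)) =
      (if Neighb i j then (-1 : ℤ) else 0)) ∧
  (∀ u v w, K.F i u = some v → K.F i v = some w →
    2 * K.h j v ≤ K.h j u + K.h j w)

/-- Axiom (A3) for neighboring colors `i, j`. -/
def A3at (K : PreGraph) (i j : ℕ) : Prop :=
  (∀ u v v', K.F i u = some v → K.F j u = some v' →
    K.h j v = K.h j u →
    ((K.h i v' : ℤ) - (K.h i u : ℤ) = 1 ∧ ∃ w, K.F j v = some w ∧ K.F i v' = some w)) ∧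
  (∀ u u' v, K.F i u = some v → K.F j u' = some v →
    (K.h j v : ℤ) - (K.h j u : ℤ) = 1 →
    (K.h i v = K.h i u' ∧ ∃ w, K.F j w = some u ∧ K.F i w = some u'))

/-- Axiom (A4) (Verma relations) for neighboring colors `i, j`. -/
def A4at (K : PreGraph) (i j : ℕ) : Prop :=
  (∀ u v v', K.F i u = some v → K.F j u = some v' →
    (K.h j v : ℤ) - (K.h j u : ℤ) = 1 → (K.h i v' : ℤ) - (K.h i u : ℤ) = 1 →
    ∃ w, (((K.F i u).bind (K.F j)).bind (K.F j)).bind (K.F i) = some w ∧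
         (((K.F j u).bind (K.F i)).bind (K.F i)).bind (K.F j) = some w) ∧
  (∀ u u' v, K.F i u = some v → K.F j u' = some v →
    K.h j v = K.h j u → K.h i v = K.h i u' →
    ∃ w, (((K.Finv i v).bind (K.Finv j)).bind (K.Finv j)).bind (K.Finv i) = some w ∧
         (((K.Finv j v).bind (K.Finv i)).bind (K.Finv i)).bind (K.Finv j) = some w)

/-- Axiom (A5) for colors `i, j` at distance at least 2. -/
def A5at (K : PreGraph) (i j : ℕ) : Prop :=
  ∀ Fi ∈ ({K.F i, K.Finv i} : Set (K.V → Option K.V)),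
  ∀ Fj ∈ ({K.F j, K.Finv j} : Set (K.V → Option K.V)),
  ∀ v, (Fi v).isSome → (Fj v).isSome →
    ∃ w, (Fi v).bind Fj = some w ∧ (Fj v).bind Fi = some w

/-- `K` is a regular crystal of type A on the color set `C`
(an `A_{|C|}`-crystal when `C` is an integer interval). -/
def IsCrystalOn (K : PreGraph) (C : Set ℕ) : Prop :=
  IsColored K C ∧ K.Connected ∧
  (∀ i ∈ C, ∀ j ∈ C, i ≠ j → A2at K i j) ∧
  (∀ i ∈ C, ∀ j ∈ C, Neighb i j → A3at K i j ∧ A4at K i j) ∧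
  (∀ i ∈ C, ∀ j ∈ C, Far i j → A5at K i j)

/-- `K` is an `A_n`-crystal (colors `1, …, n`). -/
def IsACrystal (n : ℕ) (K : PreGraph) : Prop := IsCrystalOn K (Set.Icc 1 n)

/-- Apply a list of operators, head first. -/
def applyStr (K : PreGraph) : List ℕ → K.V → Option K.V
  | [], v => some v
  | i :: L, v => (K.F i v).bind (applyStr K L)

/-- The string `w_{m,k,j} = F_{o+j} F_{o+j+1} ⋯ F_{o+j+k-1}` (rightmost applied
first, i.e. head of the list applied first) for a crystal with colors `o+1, …, o+m`. -/
def wStr (o k j : ℕ) : List ℕ := (List.range k).map (fun m => o + j + k - 1 - m)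

/-- The string `S_{m,k} = w_{m,k,m-k+1} ⋯ w_{m,k,2} w_{m,k,1}` for a crystal with
colors `o+1, …, o+m`. -/
def SStr (o m k : ℕ) : List ℕ :=
  (List.range (m - k + 1)).flatMap fun jm => wStr o k (jm + 1)

/-- The string `S_{m,m}^{a_{o+m}} ⋯ S_{m,1}^{a_{o+1}}` for a crystal with colors
`o+1, …, o+m`, defining the principal vertex with coordinates `a`. -/
def prinStr (o m : ℕ) (a : ℕ → ℕ) : List ℕ :=
  (List.range m).flatMap fun km => (List.replicate (a (o + km + 1)) (SStr o m (km + 1))).flatten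

def prinOpt (K : PreGraph) (o m : ℕ) (s : K.V) (a : ℕ → ℕ) : Option K.V :=
  applyStr K (prinStr o m a) s

/-- `p` is the principal vertex with coordinates `a` of the crystal `K` with colors
`o+1, …, o+m` and source `s`. -/
def IsPrin (K : PreGraph) (o m : ℕ) (s : K.V) (a : ℕ → ℕ) (p : K.V) : Prop :=
  prinOpt K o m s a = some p

/-- The principal lattice of an `A_n`-crystal with source `s` and parameter `c`. -/
def PrinLat (K : PreGraph) (n : ℕ) (s : K.V) (c : ℕ → ℕ) : Set K.V :=
  {p | ∃ a : ℕ → ℕ, (∀ i, 1 ≤ i → i ≤ n → a i ≤ c i) ∧ IsPrin K 0 n s a p}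

/-- One undirected step along an edge with color in `I`. -/
def stepOn (K : PreGraph) (I : Set ℕ) (u v : K.V) : Prop :=
  ∃ i ∈ I, K.F i u = some v ∨ K.F i v = some u

/-- `u` lies in the same `I`-colored component as `v`. -/
def inComp (K : PreGraph) (I : Set ℕ) (v u : K.V) : Prop :=
  Relation.ReflTransGen (stepOn K I) v u

/-- The subcrystal of `K` with color set `I` containing `v` (the maximal connected
subgraph through `v` using only colors in `I`). -/
def PreGraph.sub (K : PreGraph) (I : Set ℕ) (v : K.V) : PreGraph where
  V := {u : K.V // inComp K I v u}
  F := fun i u =>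
    if hi : i ∈ I then
      (K.F i u.1).pbind fun w hw =>
        some ⟨w, Relation.ReflTransGen.tail u.2 ⟨i, hi, Or.inl (Option.mem_def.mp hw)⟩⟩
    else none

/-- Directed reachability. -/
def dirReach (K : PreGraph) (u v : K.V) : Prop :=
  Relation.ReflTransGen (fun a b => ∃ i, K.F i a = some b) u v

/-- The interval of `K` from `p` to `q`: the subgraph formed by all vertices and
edges lying on directed paths from `p` to `q`. -/
def PreGraph.interval (K : PreGraph) (p q : K.V) : PreGraph where
  V := {w : K.V // dirReach K p w ∧ dirReach K w q}
  F := fun i u =>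
    (K.F i u.1).pbind fun w _ =>
      if hw : dirReach K p w ∧ dirReach K w q then some ⟨w, hw⟩ else none

/-- The symmetric extract: restriction to self-complementary vertices,
with `ibar`-edges given by `chain i`. -/
def extract (K : PreGraph) (chain : ℕ → K.V → Option K.V) (σ : K.V → K.V) : PreGraph where
  V := {v : K.V // σ v = v}
  F := fun i u =>
    (chain i u.1).pbind fun w _ => if hw : σ w = w then some ⟨w, hw⟩ else none

/-- The operator chain for the color `ibar` of the symmetric extract of a
symmetric `A_{2n-1}`-crystal. -/
def chainB (K : PreGraph) (n : ℕ) (i : ℕ) (u : K.V) : Option K.V :=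
  if 1 ≤ i ∧ i ≤ n then
    (if i = n then K.F n u else (K.F i u).bind (K.F (2 * n - i)))
  else none

/-- The operator chain for the color `ibar` of the symmetric extract of a
symmetric `A_{2n}`-crystal. -/
def chainC (K : PreGraph) (n : ℕ) (i : ℕ) (u : K.V) : Option K.V :=
  if 1 ≤ i ∧ i ≤ n then
    (if i = n then (((K.F n u).bind (K.F (n + 1))).bind (K.F (n + 1))).bind (K.F n)
     else (K.F i u).bind (K.F (2 * n + 1 - i)))
  else none

/-- Symmetric extract from a symmetric `A_{2n-1}`-crystal. -/
def extractB (K : PreGraph) (n : ℕ) (σ : K.V → K.V) : PreGraph := extract K (chainB K n) σ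

/-- Symmetric extract from a symmetric `A_{2n}`-crystal. -/
def extractC (K : PreGraph) (n : ℕ) (σ : K.V → K.V) : PreGraph := extract K (chainC K n) σ

/-- Admissibility of a six-tuple `(x', y, x''; y', x, y'')` in the worm model. -/
def WormOK (g1 g2 : ℕ) : ℤ × ℤ × ℤ × ℤ × ℤ × ℤ → Prop
  | (x', y, x'', y', x, y'') =>
    (0 ≤ x' ∧ x' ≤ 2 * (g1 : ℤ)) ∧ (0 ≤ x'' ∧ x'' ≤ 2 * (g1 : ℤ)) ∧
    (0 ≤ x ∧ x ≤ 2 * (g1 : ℤ)) ∧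
    (0 ≤ y' ∧ y' ≤ (g2 : ℤ)) ∧ (0 ≤ y'' ∧ y'' ≤ (g2 : ℤ)) ∧ (0 ≤ y ∧ y ≤ (g2 : ℤ)) ∧
    (2 ∣ x') ∧ (2 ∣ x'') ∧ (y' ≤ y ∧ y ≤ y'') ∧ (x' ≤ x ∧ x ≤ x'') ∧
    (y' < y → x' = x) ∧ (y < y'' → x = x'')

/-- The candidate image of a worm under the operator `1tilde`. -/
def worm1 : ℤ × ℤ × ℤ × ℤ × ℤ × ℤ → ℤ × ℤ × ℤ × ℤ × ℤ × ℤ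
  | (x', y, x'', y', x, y'') =>
    if 2 * x > x' + x'' then (x' + 2, y, x'', y', x, y'')
    else if x = x' ∧ x' = x'' ∧ y < y'' then (x', y + 1, x'', y', x, y'')
    else (x', y, x'' + 2, y', x, y'')

/-- The candidate image of a worm under the operator `2tilde`. -/
def worm2 : ℤ × ℤ × ℤ × ℤ × ℤ × ℤ → ℤ × ℤ × ℤ × ℤ × ℤ × ℤ
  | (x', y, x'', y', x, y'') =>
    if 2 * y > y' + y'' then (x', y, x'', y' + 1, x, y'')
    else if y' = y ∧ y = y'' ∧ x < x'' then (x', y, x'', y', x + 1, y'')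
    else (x', y, x'', y', x, y'' + 1)

/-- The worm graph `W(g1, g2)`, with colors `1 = 1tilde` and `2 = 2tilde`. -/
def WormGraph (g1 g2 : ℕ) : PreGraph where
  V := {w : ℤ × ℤ × ℤ × ℤ × ℤ × ℤ // WormOK g1 g2 w}
  F := fun i u =>
    if i = 1 then
      (if h1 : WormOK g1 g2 (worm1 u.1) then some ⟨worm1 u.1, h1⟩ else none)
    else if i = 2 then
      (if h2 : WormOK g1 g2 (worm2 u.1) then some ⟨worm2 u.1, h2⟩ else none)
    else none

/-- Isomorphism of colored graphs, renaming colors via `φ`. -/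
def IsoVia (K L : PreGraph) (φ : ℕ → ℕ) : Prop :=
  ∃ e : K.V ≃ L.V, ∀ i u v, K.F i u = some v ↔ L.F (φ i) (e u) = some (e v)

/-- The Cartesian product of an `i`-path of length `p` and a `j`-path of length `q`. -/
def boxGraph (i j p q : ℕ) : PreGraph where
  V := Fin (p + 1) × Fin (q + 1)
  F := fun s u =>
    if s = i then
      (if h : (u.1 : ℕ) < p then some (⟨(u.1 : ℕ) + 1, by omega⟩, u.2) else none)
    else if s = j then
      (if h : (u.2 : ℕ) < q then some (u.1, ⟨(u.2 : ℕ) + 1, by omega⟩) else none)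
    else none

/-- `B_n`-crystal: components with colors `n-1, n` are worm graphs,
with color `n-1` corresponding to `1tilde` and `n` to `2tilde`. -/
def IsBCrystal (n : ℕ) (B : PreGraph) : Prop :=
  IsColored B (Set.Icc 1 n) ∧ B.Connected ∧
  (∀ i ∈ Set.Icc 1 n, ∀ j ∈ Set.Icc 1 n, Far i j → A5at B i j) ∧
  (∀ i j, 1 ≤ i → i < n → 1 ≤ j → j < n → Neighb i j →
    ∀ v : B.V, IsCrystalOn (B.sub {i, j} v) {i, j}) ∧
  (∀ v : B.V, ∃ g1 g2 : ℕ,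
    IsoVia (B.sub ({n - 1, n} : Set ℕ) v) (WormGraph g1 g2)
      (fun x => if x = n - 1 then 1 else if x = n then 2 else 0))

/-- `C_n`-crystal: components with colors `n-1, n` are worm graphs,
with color `n-1` corresponding to `2tilde` and `n` to `1tilde`. -/
def IsCCrystal (n : ℕ) (B : PreGraph) : Prop :=
  IsColored B (Set.Icc 1 n) ∧ B.Connected ∧
  (∀ i ∈ Set.Icc 1 n, ∀ j ∈ Set.Icc 1 n, Far i j → A5at B i j) ∧
  (∀ i j, 1 ≤ i → i < n → 1 ≤ j → j < n → Neighb i j →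
    ∀ v : B.V, IsCrystalOn (B.sub {i, j} v) {i, j}) ∧
  (∀ v : B.V, ∃ g1 g2 : ℕ,
    IsoVia (B.sub ({n - 1, n} : Set ℕ) v) (WormGraph g1 g2)
      (fun x => if x = n - 1 then 2 else if x = n then 1 else 0))

/-! ### The crossing model -/

/-- `(k, i, j)` is a node `v_i^k(j)` of the supporting graph `G` for rank `n`. -/
def isNode (n k i j : ℕ) : Prop :=
  1 ≤ j ∧ j ≤ i ∧ i ≤ n ∧ i - j + 1 ≤ k ∧ k ≤ n - j + 1

instance (n k i j : ℕ) : Decidable (isNode n k i j) := by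
  unfold isNode; infer_instance

/-- Extension of a function on the nodes of `G` to the extended supporting graph:
extra nodes from which `G^k` is reachable get value `c k`, the others get `0`. -/
def fext (n : ℕ) (c : ℕ → ℕ) (f : ℕ × ℕ × ℕ → ℤ) (k i j : ℕ) : ℤ :=
  if isNode n k i j then f (k, i, j)
  else if j ≤ n - k + 1 then (c k : ℤ) else 0

/-- The slack at the node `v_i^k(j)`. -/
def epsN (n : ℕ) (c : ℕ → ℕ) (f : ℕ × ℕ × ℕ → ℤ) (k i j : ℕ) : ℤ :=
  (fext n c f k (i - 1) (j - 1) - fext n c f k i j) -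
    (fext n c f k i (j - 1) - fext n c f k (i + 1) j)

/-- The total slack at the multinode `V_i(j)`. -/
def epsTot (n : ℕ) (c : ℕ → ℕ) (f : ℕ × ℕ × ℕ → ℤ) (i j : ℕ) : ℤ :=
  ∑ k ∈ Finset.Icc (i - j + 1) (n - j + 1), epsN n c f k i j

/-- The reduced slack at the multinode `V_i(j)`. -/
def teps (n : ℕ) (c : ℕ → ℕ) (f : ℕ × ℕ × ℕ → ℤ) (i j : ℕ) : ℤ :=
  if hj : (Finset.Icc 1 j).Nonempty then
    max 0 ((Finset.Icc 1 j).inf' hj fun p => ∑ q ∈ Finset.Icc p j, epsTot n c f i q)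
  else 0

/-- `k0` satisfies the switch condition in the multinode `V_i(j)`. -/
def switchCond (n : ℕ) (f : ℕ × ℕ × ℕ → ℤ) (i j k0 : ℕ) : Prop :=
  i - j + 1 ≤ k0 ∧ k0 ≤ n - j + 1 ∧
  (∀ k, i - j + 1 ≤ k → k < k0 → isNode n k (i + 1) (j + 1) →
    f (k, i, j) = f (k, i + 1, j + 1)) ∧
  (∀ k, k0 < k → k ≤ n - j + 1 → isNode n k (i + 1) j →
    f (k, i + 1, j) = f (k, i, j))

/-- The switch-node (first node with the switch property) of the multinode `V_i(j)`. -/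
def switchNode (n : ℕ) (f : ℕ × ℕ × ℕ → ℤ) (i j : ℕ) : ℕ :=
  sInf {k0 | switchCond n f i j k0}

/-- Feasible functions of the crossing model (normalized to vanish off the nodes). -/
def Feasible (n : ℕ) (c : ℕ → ℕ) (f : ℕ × ℕ × ℕ → ℤ) : Prop :=
  (∀ k i j, ¬ isNode n k i j → f (k, i, j) = 0) ∧
  (∀ k i j, isNode n k i j → isNode n k (i - 1) j → f (k, i - 1, j) ≤ f (k, i, j)) ∧
  (∀ k i j, isNode n k i j → isNode n k (i + 1) (j + 1) → f (k, i + 1, j + 1) ≤ f (k, i, j)) ∧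
  (∀ k i j, isNode n k i j → 0 ≤ f (k, i, j) ∧ f (k, i, j) ≤ (c k : ℤ)) ∧
  (∀ i j, 1 ≤ j → j ≤ i → i ≤ n → ∃ k0, switchCond n f i j k0)

/-- Increase `f` by one at the node `(k, i, j)`. -/
def bump (f : ℕ × ℕ × ℕ → ℤ) (k i j : ℕ) : ℕ × ℕ × ℕ → ℤ :=
  fun x => if x = (k, i, j) then f x + 1 else f x

/-- The crossing-model graph `Kscr(c)`: vertices are the feasible functions, and
the move `φ_i` increases `f` by one at the switch-node of the active multinode. -/
def Kscr (n : ℕ) (c : ℕ → ℕ) : PreGraph where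
  V := {f : ℕ × ℕ × ℕ → ℤ // Feasible n c f}
  F := fun i f =>
    if 1 ≤ i ∧ i ≤ n ∧ ∃ j, 1 ≤ j ∧ j ≤ i ∧ 0 < teps n c f.1 i j then
      (let j := sSup {j | 1 ≤ j ∧ j ≤ i ∧ 0 < teps n c f.1 i j}
       let g := bump f.1 (switchNode n f.1 i j) i j
       if hg : Feasible n c g then some ⟨g, hg⟩ else none)
    else none

/-- The function `f_{a,D}` of the crossing model. -/
def faD (n : ℕ) (a : ℕ → ℕ) (D : ℕ → ℤ) : ℕ × ℕ × ℕ → ℤ := fun x =>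
  if isNode n x.1 x.2.1 x.2.2 then
    (if x.2.1 - x.2.2 + 1 = x.1 then (a x.1 : ℤ) else (a x.1 : ℤ) + min (D (x.1 - 1)) 0) +
    (if x.2.2 ≤ n - x.1 then max (D x.1) 0 else 0)
  else 0

/-! ### Descriptions of self-complementary vertices -/

/-- `(a1, a2, δ, l)` is the description of a self-complementary vertex `v` of a
symmetric `A_3`-crystal `K` with source `s` and parameter `c`. -/
def IsDescB (K : PreGraph) (s : K.V) (c : ℕ → ℕ) (v : K.V) (q : ℕ × ℕ × ℤ × ℕ) : Prop :=
  q.2.2.2 = K.t 2 v ∧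
  ∃ (a : ℕ → ℕ) (pa : K.V),
    a 1 = q.1 ∧ a 2 = q.2.1 ∧ a 3 = ((q.1 : ℤ) + max q.2.2.1 0).toNat ∧
    (∀ i, 1 ≤ i → i ≤ 3 → a i ≤ c i) ∧
    IsPrin K 0 3 s a pa ∧ inComp K (Set.Icc 1 2) pa v ∧
    0 ≤ (q.2.1 : ℤ) + q.2.2.1 ∧ 0 ≤ (a 3 : ℤ) - q.2.2.1 ∧
    ∃ s' : (K.sub (Set.Icc 1 2) pa).V, IsSource (K.sub (Set.Icc 1 2) pa) s' ∧
    ∃ z : (K.sub (Set.Icc 1 2) pa).V,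
      IsPrin (K.sub (Set.Icc 1 2) pa) 0 2 s'
        (fun i => if i = 1 then ((q.2.1 : ℤ) + q.2.2.1).toNat else ((a 3 : ℤ) - q.2.2.1).toNat) z ∧
      inComp K ({2} : Set ℕ) z.1 v

/-- The polytope of descriptions for a symmetric `A_3`-crystal with parameter `(c1, c2, c1)`. -/
def QuadB (c1 c2 : ℕ) : Set (ℕ × ℕ × ℤ × ℕ) :=
  {q | q.1 ≤ c1 ∧ q.2.1 ≤ c2 ∧ -(q.2.1 : ℤ) ≤ q.2.2.1 ∧ (q.2.1 : ℤ) - (c2 : ℤ) ≤ q.2.2.1 ∧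
       q.2.2.1 ≤ (c1 : ℤ) - (q.1 : ℤ) ∧ (q.2.2.2 : ℤ) ≤ (c2 : ℤ) + 2 * q.2.2.1}

/-- The worm associated to the description `(a1, a2, δ, l)`. -/
def wtupleB (a1 a2 : ℕ) (δ : ℤ) (l : ℕ) : ℤ × ℤ × ℤ × ℤ × ℤ × ℤ :=
  let a3 : ℤ := (a1 : ℤ) + max δ 0
  let tr : ℤ × ℤ × ℤ :=
    if 0 ≤ δ then
      if (l : ℤ) ≤ (a2 : ℤ) then ((l : ℤ), 2 * (a1 : ℤ), (a2 : ℤ))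
      else if (l : ℤ) ≤ (a2 : ℤ) + 2 * δ then
        ((a2 : ℤ), 2 * (a1 : ℤ) + (l : ℤ) - (a2 : ℤ), (a2 : ℤ))
      else ((a2 : ℤ), 2 * a3, (l : ℤ) - 2 * δ)
    else
      if (l : ℤ) ≤ (a2 : ℤ) + δ then ((l : ℤ), 2 * (a1 : ℤ), (a2 : ℤ) - δ)
      else ((a2 : ℤ) + δ, 2 * (a1 : ℤ), (l : ℤ) - 2 * δ)
  (2 * (a1 : ℤ), (a2 : ℤ), 2 * a3, tr.1, tr.2.1, tr.2.2)

def wtQ (q : ℕ × ℕ × ℤ × ℕ) : ℤ × ℤ × ℤ × ℤ × ℤ × ℤ :=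
  wtupleB q.1 q.2.1 q.2.2.1 q.2.2.2

/-- The string `(F_2 F_3)^r (F_3 F_2)^r` (rightmost applied first). -/
def diagStr (r : ℕ) : List ℕ :=
  (List.replicate r ([2, 3] : List ℕ)).flatten ++ (List.replicate r ([3, 2] : List ℕ)).flatten

/-- `(a1, a2, δ, ρ)` is the description of a self-complementary vertex `v` of a
symmetric `A_4`-crystal `K` with source `s` and parameter `c`. -/
def IsDescC (K : PreGraph) (s : K.V) (c : ℕ → ℕ) (v : K.V) (q : ℕ × ℕ × ℤ × ℕ) : Prop :=
  ∃ (a : ℕ → ℕ) (pa : K.V),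
    a 1 = q.1 ∧ a 2 = q.2.1 ∧ a 3 = ((q.2.1 : ℤ) + min q.2.2.1 0).toNat ∧
    a 4 = ((q.1 : ℤ) + max q.2.2.1 0).toNat ∧
    (∀ i, 1 ≤ i → i ≤ 4 → a i ≤ c i) ∧
    IsPrin K 0 4 s a pa ∧ inComp K (Set.Icc 1 3) pa v ∧
    0 ≤ (q.2.1 : ℤ) + q.2.2.1 ∧ 0 ≤ (a 4 : ℤ) - q.2.2.1 ∧
    (∃ s' : (K.sub (Set.Icc 1 3) pa).V, IsSource (K.sub (Set.Icc 1 3) pa) s' ∧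
     ∃ z : (K.sub (Set.Icc 1 3) pa).V,
       IsPrin (K.sub (Set.Icc 1 3) pa) 0 3 s'
         (fun i => if i = 1 then ((q.2.1 : ℤ) + q.2.2.1).toNat
                   else if i = 2 then a 3 else ((a 4 : ℤ) - q.2.2.1).toNat) z ∧
       inComp K (Set.Icc 2 3) z.1 v) ∧
    (∃ stil : (K.sub (Set.Icc 2 3) v).V, IsSource (K.sub (Set.Icc 2 3) v) stil ∧
       applyStr (K.sub (Set.Icc 2 3) v) (diagStr q.2.2.2) stil =
         some ⟨v, Relation.ReflTransGen.refl⟩)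

/-- The polytope of descriptions for a symmetric `A_4`-crystal with parameter
`(c1, c2, c2, c1)`. -/
def QuadC (c1 c2 : ℕ) : Set (ℕ × ℕ × ℤ × ℕ) :=
  {q | q.1 ≤ c1 ∧ q.2.1 ≤ c2 ∧ -(q.2.1 : ℤ) ≤ q.2.2.1 ∧
       q.2.2.1 ≤ (c1 : ℤ) - (q.1 : ℤ) ∧ (q.2.2.2 : ℤ) ≤ (c2 : ℤ) + q.2.2.1}

end


namespace OIAux

variable {V : Type} {f : V → Option V}

theorem optIter_one (v : V) : optIter f 1 v = f v := by
  cases h : f v <;> simp [optIter, h]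

theorem optIter_succ_right (k : ℕ) (v : V) :
    optIter f (k + 1) v = (optIter f k v).bind f := by
  induction k generalizing v with
  | zero => cases h : f v <;> simp [optIter, h]
  | succ k ih =>
    show (f v).bind (optIter f (k + 1)) = ((f v).bind (optIter f k)).bind f
    cases h : f v with
    | none => simp
    | some w => simp only [Option.bind_some]; exact ih w

theorem optIter_add (a b : ℕ) (v : V) :
    optIter f (a + b) v = (optIter f a v).bind (optIter f b) := by
  induction a generalizing v with
  | zero => simp [optIter]
  | succ a ih =>
    rw [Nat.succ_add]
    show (f v).bind (optIter f (a + b)) = ((f v).bind (optIter f a)).bind (optIter f b)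
    cases h : f v with
    | none => simp
    | some w => simp only [Option.bind_some]; exact ih w

theorem isSome_of_le {k m : ℕ} (hkm : k ≤ m) {v : V}
    (hm : (optIter f m v).isSome) : (optIter f k v).isSome := by
  obtain ⟨d, rfl⟩ : ∃ d, m = k + d := ⟨m - k, by omega⟩
  rw [optIter_add] at hm
  cases h' : optIter f k v with
  | none => rw [h'] at hm; simp at hm
  | some w => simp

/-- set whose sup is `h`. -/
def hS (f : V → Option V) (v : V) : Set ℕ := {k | (optIter f k v).isSome = true}

/-- set whose sup is `t`. -/
def tS (f : V → Option V) (v : V) : Set ℕ := {k | ∃ u, optIter f k u = some v}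

theorem zero_mem_hS (v : V) : 0 ∈ hS f v := by simp [hS, optIter]
theorem zero_mem_tS (v : V) : 0 ∈ tS f v := ⟨v, by simp [optIter]⟩

variable (hfin : Finite V) (hcyc : ∀ (v : V) (k : ℕ), 0 < k → optIter f k v ≠ some v)

include hfin hcyc in
theorem le_card_of_isSome {k : ℕ} {v : V} (h : (optIter f k v).isSome) :
    k ≤ Nat.card V := by
  by_contra hlt
  push_neg at hlt
  have hg : ∀ m : Fin (k + 1), (optIter f (m : ℕ) v).isSome :=
    fun m => isSome_of_le (by omega) h
  have hft : Fintype V := Fintype.ofFinite V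
  have hcard : Fintype.card V < Fintype.card (Fin (k + 1)) := by
    rw [Fintype.card_fin]
    have hnc := Nat.card_eq_fintype_card (α := V)
    omega
  obtain ⟨a, b, hab, heq⟩ :=
    Fintype.exists_ne_map_eq_of_card_lt
      (fun m : Fin (k + 1) => (optIter f (m : ℕ) v).get (hg m)) hcard
  have main : ∀ (p q : ℕ), p < q → ∀ x, optIter f p v = some x →
      optIter f q v = some x → False := by
    intro p q hpq x hp hq
    have h3 : optIter f (p + (q - p)) v = some x := by
      rwa [show p + (q - p) = q by omega]
    rw [optIter_add, hp, Option.bind_some] at h3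
    exact hcyc x (q - p) (by omega) h3
  have ha : optIter f (a : ℕ) v = some ((optIter f (a : ℕ) v).get (hg a)) := by simp
  have hb : optIter f (b : ℕ) v = some ((optIter f (b : ℕ) v).get (hg b)) := by simp
  rcases lt_or_gt_of_ne (fun h' : (a : ℕ) = (b : ℕ) => hab (Fin.ext h')) with hab' | hab'
  · exact main _ _ hab' _ ha (by rw [hb, heq])
  · exact main _ _ hab' _ hb (by rw [ha, heq])

include hfin hcyc in
theorem hS_bdd (v : V) : BddAbove (hS f v) :=
  ⟨Nat.card V, fun _ hk => le_card_of_isSome hfin hcyc hk⟩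

include hfin hcyc in
theorem tS_bdd (v : V) : BddAbove (tS f v) :=
  ⟨Nat.card V, fun _ hk => by
    obtain ⟨u, hu⟩ := hk
    exact le_card_of_isSome hfin hcyc (by rw [hu]; rfl)⟩

include hfin hcyc in
theorem hS_eq_Iic (v : V) : hS f v = Set.Iic (sSup (hS f v)) := by
  have hmem : sSup (hS f v) ∈ hS f v :=
    Nat.sSup_mem ⟨0, zero_mem_hS v⟩ (hS_bdd hfin hcyc v)
  ext k
  constructor
  · exact fun hk => le_csSup (hS_bdd hfin hcyc v) hk
  · exact fun hk => isSome_of_le hk hmem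

include hfin hcyc in
theorem tS_eq_Iic (v : V) : tS f v = Set.Iic (sSup (tS f v)) := by
  have hmem : sSup (tS f v) ∈ tS f v :=
    Nat.sSup_mem ⟨0, zero_mem_tS v⟩ (tS_bdd hfin hcyc v)
  ext k
  constructor
  · exact fun hk => le_csSup (tS_bdd hfin hcyc v) hk
  · intro hk
    have hk' : k ≤ sSup (tS f v) := hk
    obtain ⟨u, hu⟩ := hmem
    obtain ⟨d, hd⟩ : ∃ d, sSup (tS f v) = d + k := ⟨sSup (tS f v) - k, by omega⟩
    rw [hd, optIter_add] at hu
    cases h' : optIter f d u with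
    | none => rw [h'] at hu; simp at hu
    | some u1 => rw [h'] at hu; exact ⟨u1, hu⟩

include hfin hcyc in
theorem isSome_iff_one_le {v : V} : (f v).isSome ↔ 1 ≤ sSup (hS f v) := by
  have h0 : (f v).isSome ↔ 1 ∈ hS f v := by simp [hS, optIter_one]
  rw [h0]
  constructor
  · exact fun h1 => le_csSup (hS_bdd hfin hcyc v) h1
  · intro h1
    rw [hS_eq_Iic hfin hcyc v]
    exact Set.mem_Iic.mpr h1

include hfin hcyc in
theorem exists_pred_iff_one_le {v : V} : (∃ u, f u = some v) ↔ 1 ≤ sSup (tS f v) := by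
  have h0 : (∃ u, f u = some v) ↔ 1 ∈ tS f v := by
    constructor
    · rintro ⟨u, hu⟩; exact ⟨u, by rw [optIter_one]; exact hu⟩
    · rintro ⟨u, hu⟩; exact ⟨u, by rwa [optIter_one] at hu⟩
  rw [h0]
  constructor
  · exact fun h1 => le_csSup (tS_bdd hfin hcyc v) h1
  · intro h1
    rw [tS_eq_Iic hfin hcyc v]
    exact Set.mem_Iic.mpr h1

include hfin hcyc in
theorem h_step {v w : V} (hw : f v = some w) :
    sSup (hS f v) = sSup (hS f w) + 1 := by
  have key : ∀ k, k ∈ hS f w ↔ k + 1 ∈ hS f v := by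
    intro k; simp [hS, optIter, hw]
  have h1 : sSup (hS f w) + 1 ≤ sSup (hS f v) :=
    le_csSup (hS_bdd hfin hcyc v)
      ((key _).1 (Nat.sSup_mem ⟨0, zero_mem_hS w⟩ (hS_bdd hfin hcyc w)))
  have h2 : 1 ≤ sSup (hS f v) := (isSome_iff_one_le hfin hcyc).1 (by rw [hw]; rfl)
  have hmem : sSup (hS f v) ∈ hS f v :=
    Nat.sSup_mem ⟨0, zero_mem_hS v⟩ (hS_bdd hfin hcyc v)
  obtain ⟨m, hm⟩ : ∃ m, sSup (hS f v) = m + 1 := ⟨sSup (hS f v) - 1, by omega⟩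
  rw [hm] at hmem
  have h3 := le_csSup (hS_bdd hfin hcyc w) ((key m).2 hmem)
  omega

variable (hinj : ∀ u u' w : V, f u = some w → f u' = some w → u = u')

include hfin hcyc hinj in
theorem t_step {u v : V} (hw : f u = some v) :
    sSup (tS f v) = sSup (tS f u) + 1 := by
  have key : ∀ k, k ∈ tS f u → k + 1 ∈ tS f v := by
    rintro k ⟨x, hx⟩
    exact ⟨x, by rw [optIter_succ_right, hx, Option.bind_some, hw]⟩
  have h1 : sSup (tS f u) + 1 ≤ sSup (tS f v) :=
    le_csSup (tS_bdd hfin hcyc v)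
      (key _ (Nat.sSup_mem ⟨0, zero_mem_tS u⟩ (tS_bdd hfin hcyc u)))
  have hmem : sSup (tS f v) ∈ tS f v :=
    Nat.sSup_mem ⟨0, zero_mem_tS v⟩ (tS_bdd hfin hcyc v)
  obtain ⟨m, hm⟩ : ∃ m, sSup (tS f v) = m + 1 := ⟨sSup (tS f v) - 1, by omega⟩
  rw [hm] at hmem
  obtain ⟨x, hx⟩ := hmem
  rw [optIter_succ_right] at hx
  cases h' : optIter f m x with
  | none => rw [h'] at hx; simp at hx
  | some u1 =>
    rw [h', Option.bind_some] at hx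
    have hu1 : u1 = u := hinj _ _ _ hx hw
    have h3 := le_csSup (tS_bdd hfin hcyc u) ⟨x, by rw [h', hu1]⟩
    omega

end OIAux


section MainProof

/-- for a self-complementary vertex `v` of a symmetric `A_{2n-1}`-crystal:
(a) `h_i(v) = h_{i'}(v)` and `t_i(v) = t_{i'}(v)` for complementary colors `i, i' = 2n-i`;
(b) each color class of the symmetric extract `B` satisfies (A1), and the maximal
`ibar`-paths of `B` through `v` have lengths `h_i(v)` and `t_i(v)`. -/
theorem extract_monochromatic_paths
    (n : ℕ) (hn : 2 ≤ n) (K : PreGraph) (hK : IsACrystal (2 * n - 1) K)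
    (s : K.V) (hs : IsSource K s)
    (c : ℕ → ℕ) (hc : ∀ i, 1 ≤ i → i ≤ 2 * n - 1 → K.h i s = c i)
    (hsym : ∀ i, 1 ≤ i → i ≤ 2 * n - 1 → c i = c (2 * n - i))
    (σ : K.V → K.V) (hσb : Function.Bijective σ)
    (hσ : ∀ (i : ℕ) (u v : K.V), K.F i u = some v ↔ K.F (2 * n - i) (σ u) = some (σ v))
    (v : K.V) (hv : σ v = v) :
    (∀ i, 1 ≤ i → i ≤ 2 * n - 1 →
      K.h i v = K.h (2 * n - i) v ∧ K.t i v = K.t (2 * n - i) v) ∧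
    (∀ i, 1 ≤ i → i ≤ n →
      (∀ u u' w : (extractB K n σ).V,
        (extractB K n σ).F i u = some w → (extractB K n σ).F i u' = some w → u = u') ∧
      (∀ (u : (extractB K n σ).V) (k : ℕ), 0 < k →
        optIter ((extractB K n σ).F i) k u ≠ some u) ∧
      (extractB K n σ).h i ⟨v, hv⟩ = K.h i v ∧
      (extractB K n σ).t i ⟨v, hv⟩ = K.t i v) := by
  have hfinK : Finite K.V := hK.1.1
  have hinjK := hK.1.2.2.1
  have hcycK := hK.1.2.2.2
  have hA2 := hK.2.2.1
  have hA5 := hK.2.2.2.2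
  -- σ transfer along iterated paths
  have iterσ : ∀ i k (u w : K.V), optIter (K.F i) k u = some w →
      optIter (K.F (2 * n - i)) k (σ u) = some (σ w) := by
    intro i k
    induction k with
    | zero =>
      intro u w h
      obtain rfl : u = w := by simpa [optIter] using h
      simp [optIter]
    | succ k ih =>
      intro u w h
      simp only [optIter] at h ⊢
      cases hx : K.F i u with
      | none => rw [hx] at h; simp at h
      | some x =>
        rw [hx, Option.bind_some] at h
        rw [(hσ i u x).1 hx, Option.bind_some]
        exact ih x w h
  -- part (a), for all σ-fixed vertices
  have parta : ∀ i, i ≤ 2 * n → ∀ u : K.V, σ u = u →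
      K.h i u = K.h (2 * n - i) u ∧ K.t i u = K.t (2 * n - i) u := by
    intro i hi u hu
    constructor
    · show sSup (OIAux.hS (K.F i) u) = sSup (OIAux.hS (K.F (2 * n - i)) u)
      congr 1
      ext k
      simp only [OIAux.hS, Set.mem_setOf_eq]
      constructor
      · intro hk
        obtain ⟨w, hw⟩ := Option.isSome_iff_exists.mp hk
        have h2 := iterσ i k u w hw
        rw [hu] at h2
        exact Option.isSome_iff_exists.mpr ⟨σ w, h2⟩
      · intro hk
        obtain ⟨w, hw⟩ := Option.isSome_iff_exists.mp hk
        have h2 := iterσ (2 * n - i) k u w hw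
        rw [hu, show 2 * n - (2 * n - i) = i by omega] at h2
        exact Option.isSome_iff_exists.mpr ⟨σ w, h2⟩
    · show sSup (OIAux.tS (K.F i) u) = sSup (OIAux.tS (K.F (2 * n - i)) u)
      congr 1
      ext k
      simp only [OIAux.tS, Set.mem_setOf_eq]
      constructor
      · rintro ⟨x, hx⟩
        refine ⟨σ x, ?_⟩
        have h2 := iterσ i k x u hx
        rwa [hu] at h2
      · rintro ⟨x, hx⟩
        refine ⟨σ x, ?_⟩
        have h2 := iterσ (2 * n - i) k x u hx
        rwa [hu, show 2 * n - (2 * n - i) = i by omega] at h2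
  -- characterization of edges of the extract
  have BFiff : ∀ (i : ℕ) (u w : (extractB K n σ).V),
      (extractB K n σ).F i u = some w ↔ chainB K n i u.1 = some w.1 := by
    intro i u w
    show (chainB K n i u.1).pbind _ = some w ↔ _
    refine Iff.trans Option.pbind_eq_some_iff ?_
    constructor
    · rintro ⟨z, Hz, hg⟩
      by_cases hz : σ z = z
      · rw [dif_pos hz] at hg
        have : (⟨z, hz⟩ : (extractB K n σ).V) = w := Option.some_inj.mp hg
        rw [← this]
        exact Option.mem_def.mp Hz
      · rw [dif_neg hz] at hg
        exact absurd hg (by simp)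
    · intro h
      refine ⟨w.1, Option.mem_def.mpr h, ?_⟩
      rw [dif_pos w.2]
      rfl
  have chain_n : ∀ u : K.V, chainB K n n u = K.F n u := by
    intro u
    have h1n : (1 : ℕ) ≤ n := by omega
    simp [chainB, h1n]
  have chain_lt : ∀ i, 1 ≤ i → i < n → ∀ u : K.V,
      chainB K n i u = (K.F i u).bind (K.F (2 * n - i)) := by
    intro i h1 h2 u
    rw [chainB, if_pos ⟨h1, le_of_lt h2⟩, if_neg (Nat.ne_of_lt h2)]
  -- Finv helpers
  have Finv_eq : ∀ (j : ℕ) (x u : K.V), K.F j x = some u → K.Finv j u = some x := by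
    intro j x u h
    have hex : ∃ y, K.F j y = some u := ⟨x, h⟩
    unfold PreGraph.Finv
    rw [dif_pos hex]
    exact congrArg some (hinjK j _ _ _ hex.choose_spec h)
  have Finv_spec : ∀ (j : ℕ) (w x : K.V), K.Finv j w = some x → K.F j x = some w := by
    intro j w x h
    unfold PreGraph.Finv at h
    by_cases hex : ∃ y, K.F j y = some w
    · rw [dif_pos hex] at h
      rw [← Option.some_inj.mp h]
      exact hex.choose_spec
    · rw [dif_neg hex] at h
      exact absurd h (by simp)
  -- effect of an ibar-edge on h_i and t_i
  have step1 : ∀ i, 1 ≤ i → i ≤ n → ∀ u w : (extractB K n σ).V,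
      (extractB K n σ).F i u = some w →
      K.h i u.1 = K.h i w.1 + 1 ∧ K.t i w.1 = K.t i u.1 + 1 := by
    intro i hi1 hin u w hf
    have hc := (BFiff i u w).1 hf
    by_cases hisn : i = n
    · subst hisn
      rw [chain_n] at hc
      exact ⟨OIAux.h_step hfinK (hcycK i) hc, OIAux.t_step hfinK (hcycK i) (hinjK i) hc⟩
    · have hlt : i < n := by omega
      rw [chain_lt i hi1 hlt] at hc
      obtain ⟨x, hx, hxw⟩ := Option.bind_eq_some_iff.mp hc
      have hA2' := (hA2 (2 * n - i) (Set.mem_Icc.mpr ⟨by omega, by omega⟩) i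
        (Set.mem_Icc.mpr ⟨hi1, by omega⟩) (by omega)).1 x w.1 hxw
      obtain ⟨ht1, hh1, hd⟩ := hA2'
      have hnb : ¬ Neighb (2 * n - i) i := by unfold Neighb; omega
      rw [if_neg hnb] at hd
      have hhx : K.h i u.1 = K.h i x + 1 := OIAux.h_step hfinK (hcycK i) hx
      have htx : K.t i x = K.t i u.1 + 1 := OIAux.t_step hfinK (hcycK i) (hinjK i) hx
      constructor <;> omega
  have iter1 : ∀ i, 1 ≤ i → i ≤ n → ∀ (k : ℕ) (x y : (extractB K n σ).V),
      optIter ((extractB K n σ).F i) k x = some y →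
      K.h i x.1 = K.h i y.1 + k ∧ K.t i y.1 = K.t i x.1 + k := by
    intro i hi1 hin k
    induction k with
    | zero =>
      intro x y h
      obtain rfl : x = y := by simpa [optIter] using h
      omega
    | succ k ih =>
      intro x y h
      simp only [optIter] at h
      cases hx : (extractB K n σ).F i x with
      | none => rw [hx] at h; simp at h
      | some z =>
        rw [hx, Option.bind_some] at h
        have h1 := step1 i hi1 hin x z hx
        have h2 := ih z y h
        omega
  -- injectivity
  have binj : ∀ i, 1 ≤ i → i ≤ n → ∀ u u' w : (extractB K n σ).V,
      (extractB K n σ).F i u = some w → (extractB K n σ).F i u' = some w → u = u' := by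
    intro i hi1 hin u u' w h h'
    have hc := (BFiff i u w).1 h
    have hc' := (BFiff i u' w).1 h'
    apply Subtype.ext
    by_cases hisn : i = n
    · subst hisn
      rw [chain_n] at hc hc'
      exact hinjK i _ _ _ hc hc'
    · have hlt : i < n := by omega
      rw [chain_lt i hi1 hlt] at hc hc'
      obtain ⟨x, hx1, hx2⟩ := Option.bind_eq_some_iff.mp hc
      obtain ⟨x', hx1', hx2'⟩ := Option.bind_eq_some_iff.mp hc'
      obtain rfl : x = x' := hinjK (2 * n - i) _ _ _ hx2 hx2'
      exact hinjK i _ _ _ hx1 hx1'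
  -- acyclicity
  have bcyc : ∀ i, 1 ≤ i → i ≤ n → ∀ (u : (extractB K n σ).V) (k : ℕ), 0 < k →
      optIter ((extractB K n σ).F i) k u ≠ some u := by
    intro i hi1 hin u k hk h
    have := (iter1 i hi1 hin k u u h).1
    omega
  -- forward existence
  have step2 : ∀ i, 1 ≤ i → i ≤ n → ∀ u : (extractB K n σ).V, 1 ≤ K.h i u.1 →
      ∃ w : (extractB K n σ).V, (extractB K n σ).F i u = some w := by
    intro i hi1 hin u hh
    by_cases hisn : i = n
    · subst hisn
      obtain ⟨x, hx⟩ := Option.isSome_iff_exists.mp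
        ((OIAux.isSome_iff_one_le hfinK (hcycK i)).2 hh)
      have h2 := (hσ i u.1 x).1 hx
      rw [u.2, show 2 * i - i = i by omega] at h2
      have hxx : σ x = x := (Option.some_inj.mp (hx.symm.trans h2)).symm
      exact ⟨⟨x, hxx⟩, (BFiff i u ⟨x, hxx⟩).2 (by rw [chain_n]; exact hx)⟩
    · have hlt : i < n := by omega
      obtain ⟨x, hx⟩ := Option.isSome_iff_exists.mp
        ((OIAux.isSome_iff_one_le hfinK (hcycK i)).2 hh)
      have hh' : K.h i u.1 = K.h (2 * n - i) u.1 := (parta i (by omega) u.1 u.2).1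
      have hA2' := (hA2 i (Set.mem_Icc.mpr ⟨hi1, by omega⟩) (2 * n - i)
        (Set.mem_Icc.mpr ⟨by omega, by omega⟩) (by omega)).1 u.1 x hx
      have hhx : 1 ≤ K.h (2 * n - i) x := by
        have := hA2'.2.1; omega
      obtain ⟨w, hw⟩ := Option.isSome_iff_exists.mp
        ((OIAux.isSome_iff_one_le hfinK (hcycK (2 * n - i))).2 hhx)
      have hσx : K.F (2 * n - i) u.1 = some (σ x) := by
        have h2 := (hσ i u.1 x).1 hx
        rwa [u.2] at h2
      have hfar : Far i (2 * n - i) := Or.inl (by omega)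
      obtain ⟨z, hz1, hz2⟩ := hA5 i (Set.mem_Icc.mpr ⟨hi1, by omega⟩) (2 * n - i)
        (Set.mem_Icc.mpr ⟨by omega, by omega⟩) hfar
        (K.F i) (Set.mem_insert _ _) (K.F (2 * n - i)) (Set.mem_insert _ _) u.1
        (by rw [hx]; rfl) (by rw [hσx]; rfl)
      rw [hx, Option.bind_some, hw] at hz1
      rw [hσx, Option.bind_some] at hz2
      have hzw : w = z := Option.some_inj.mp hz1
      have hz2' : K.F i (σ x) = some w := by rw [hzw]; exact hz2
      have hσw : K.F i (σ x) = some (σ w) := by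
        have h2 := (hσ (2 * n - i) x w).1 hw
        rwa [show 2 * n - (2 * n - i) = i by omega] at h2
      have hww : σ w = w := Option.some_inj.mp (hσw.symm.trans hz2')
      refine ⟨⟨w, hww⟩, (BFiff i u ⟨w, hww⟩).2 ?_⟩
      rw [chain_lt i hi1 hlt, hx, Option.bind_some]
      exact hw
  -- backward existence
  have step3 : ∀ i, 1 ≤ i → i ≤ n → ∀ u : (extractB K n σ).V, 1 ≤ K.t i u.1 →
      ∃ u0 : (extractB K n σ).V, (extractB K n σ).F i u0 = some u := by
    intro i hi1 hin u ht
    by_cases hisn : i = n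
    · subst hisn
      obtain ⟨x, hx⟩ := (OIAux.exists_pred_iff_one_le hfinK (hcycK i)).2 ht
      have h2 := (hσ i x u.1).1 hx
      rw [u.2, show 2 * i - i = i by omega] at h2
      have hxx : σ x = x := hinjK i _ _ _ h2 hx
      exact ⟨⟨x, hxx⟩, (BFiff i ⟨x, hxx⟩ u).2 (by rw [chain_n]; exact hx)⟩
    · have hlt : i < n := by omega
      have ht' : 1 ≤ K.t (2 * n - i) u.1 := by
        have := (parta i (by omega) u.1 u.2).2; omega
      obtain ⟨m, hm⟩ := (OIAux.exists_pred_iff_one_le hfinK (hcycK (2 * n - i))).2 ht'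
      have hA2' := (hA2 (2 * n - i) (Set.mem_Icc.mpr ⟨by omega, by omega⟩) i
        (Set.mem_Icc.mpr ⟨hi1, by omega⟩) (by omega)).1 m u.1 hm
      have htm : 1 ≤ K.t i m := by
        have := hA2'.1; omega
      obtain ⟨u0, hu0⟩ := (OIAux.exists_pred_iff_one_le hfinK (hcycK i)).2 htm
      have hσu0 : K.F (2 * n - i) (σ u0) = some (σ m) := (hσ i u0 m).1 hu0
      have hσm : K.F i (σ m) = some u.1 := by
        have h2 := (hσ (2 * n - i) m u.1).1 hm
        rwa [show 2 * n - (2 * n - i) = i by omega, u.2] at h2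
      have hinv1 : K.Finv i u.1 = some (σ m) := Finv_eq i (σ m) u.1 hσm
      have hinv2 : K.Finv (2 * n - i) u.1 = some m := Finv_eq (2 * n - i) m u.1 hm
      have hfar : Far i (2 * n - i) := Or.inl (by omega)
      obtain ⟨z, hz1, hz2⟩ := hA5 i (Set.mem_Icc.mpr ⟨hi1, by omega⟩) (2 * n - i)
        (Set.mem_Icc.mpr ⟨by omega, by omega⟩) hfar
        (K.Finv i) (Set.mem_insert_of_mem _ rfl)
        (K.Finv (2 * n - i)) (Set.mem_insert_of_mem _ rfl) u.1
        (by rw [hinv1]; rfl) (by rw [hinv2]; rfl)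
      rw [hinv1, Option.bind_some] at hz1
      rw [hinv2, Option.bind_some] at hz2
      have hzu0 : z = u0 := by
        have h3 := Finv_eq i u0 m hu0
        rw [h3] at hz2
        exact (Option.some_inj.mp hz2).symm
      rw [hzu0] at hz1
      have hF : K.F (2 * n - i) u0 = some (σ m) := Finv_spec (2 * n - i) (σ m) u0 hz1
      have hu0u0 : σ u0 = u0 := (hinjK (2 * n - i) _ _ _ hF hσu0).symm
      refine ⟨⟨u0, hu0u0⟩, (BFiff i ⟨u0, hu0u0⟩ u).2 ?_⟩
      rw [chain_lt i hi1 hlt, hu0, Option.bind_some]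
      exact hm
  -- iterated existence
  have hforward : ∀ i, 1 ≤ i → i ≤ n → ∀ (k : ℕ) (u : (extractB K n σ).V),
      k ≤ K.h i u.1 → (optIter ((extractB K n σ).F i) k u).isSome := by
    intro i hi1 hin k
    induction k with
    | zero => intro u _; simp [optIter]
    | succ k ih =>
      intro u hk
      obtain ⟨w, hw⟩ := step2 i hi1 hin u (by omega)
      have heff := (step1 i hi1 hin u w hw).1
      simp only [optIter]
      rw [hw, Option.bind_some]
      exact ih w (by omega)
  have tforward : ∀ i, 1 ≤ i → i ≤ n → ∀ (k : ℕ) (u : (extractB K n σ).V),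
      k ≤ K.t i u.1 → ∃ x, optIter ((extractB K n σ).F i) k x = some u := by
    intro i hi1 hin k
    induction k with
    | zero => intro u _; exact ⟨u, by simp [optIter]⟩
    | succ k ih =>
      intro u hk
      obtain ⟨u0, hu0⟩ := step3 i hi1 hin u (by omega)
      have heff := (step1 i hi1 hin u0 u hu0).2
      obtain ⟨x, hx⟩ := ih u0 (by omega)
      exact ⟨x, by rw [OIAux.optIter_succ_right, hx, Option.bind_some]; exact hu0⟩
  refine ⟨fun i h1 h2 => parta i (by omega) v hv, fun i hi1 hin =>
    ⟨binj i hi1 hin, bcyc i hi1 hin, ?_, ?_⟩⟩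
  · show sSup (OIAux.hS ((extractB K n σ).F i) ⟨v, hv⟩) = K.h i v
    have hset : OIAux.hS ((extractB K n σ).F i) ⟨v, hv⟩ = Set.Iic (K.h i v) := by
      ext k
      simp only [OIAux.hS, Set.mem_setOf_eq, Set.mem_Iic]
      constructor
      · intro hk
        obtain ⟨y, hy⟩ := Option.isSome_iff_exists.mp hk
        have h5 : K.h i v = K.h i y.1 + k := (iter1 i hi1 hin k ⟨v, hv⟩ y hy).1
        omega
      · intro hk
        exact hforward i hi1 hin k ⟨v, hv⟩ hk
    rw [hset, csSup_Iic]
  · show sSup (OIAux.tS ((extractB K n σ).F i) ⟨v, hv⟩) = K.t i v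
    have hset : OIAux.tS ((extractB K n σ).F i) ⟨v, hv⟩ = Set.Iic (K.t i v) := by
      ext k
      simp only [OIAux.tS, Set.mem_setOf_eq, Set.mem_Iic]
      constructor
      · rintro ⟨x, hx⟩
        have h5 : K.t i v = K.t i x.1 + k := (iter1 i hi1 hin k x ⟨v, hv⟩ hx).2
        omega
      · intro hk
        exact tforward i hi1 hin k ⟨v, hv⟩ hk
    rw [hset, csSup_Iic]

end MainProof
end

section
/- Let K=K(c) be a symmetric A_{2n-1}-crystal with symmetric extract B, and let i,j be colors with i,j<n and |i-j|=1. Then every connected component of the 2-colored graph (S, E_{ibar} disjoint-union E_{jbar}) is an A_2-crystal, i.e. it satisfies axioms (A1)-(A4) with the two colors ibar and jbar regarded as neighboring. -/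
open Classical

section AuxLemmas

open PreGraph

theorem optIter_succ' {V : Type} (f : V → Option V) (k : ℕ) (v : V) :
    optIter f (k+1) v = (optIter f k v).bind f := by
  induction k generalizing v with
  | zero => show (f v).bind (optIter f 0) = (some v).bind f; cases h : f v <;> simp [optIter, h]
  | succ k ih =>
    show (f v).bind (optIter f (k+1)) = ((f v).bind (optIter f k)).bind f
    cases h : f v with
    | none => rfl
    | some x => simpa using ih x

theorem optIter_add {V : Type} (f : V → Option V) (a b : ℕ) (v : V) :
    optIter f (a+b) v = (optIter f a v).bind (optIter f b) := by
  induction a generalizing v with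
  | zero => rw [Nat.zero_add]; simp [optIter]
  | succ a ih =>
    rw [show a+1+b = (a+b)+1 from by omega]
    show (f v).bind (optIter f (a+b)) = ((f v).bind (optIter f a)).bind (optIter f b)
    cases h : f v with
    | none => rfl
    | some x => simpa using ih x

theorem isSome_of_le {V : Type} {f : V → Option V} {m k : ℕ} (hmk : m ≤ k) {v : V}
    (h : (optIter f k v).isSome) : (optIter f m v).isSome := by
  rw [show k = m + (k - m) by omega, optIter_add] at h
  cases hm : optIter f m v with
  | none => rw [hm] at h; simp at h
  | some x => simp

theorem exists_of_le {V : Type} {f : V → Option V} {m k : ℕ} (hmk : m ≤ k) {u v : V}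
    (h : optIter f k u = some v) : ∃ w, optIter f m w = some v := by
  rw [show k = (k - m) + m by omega, optIter_add] at h
  rcases Option.bind_eq_some_iff.mp h with ⟨w, _, hw2⟩
  exact ⟨w, hw2⟩

variable {K : PreGraph}
  (hfin : Finite K.V)
  (hinj : ∀ (i : ℕ) (u u' v : K.V), K.F i u = some v → K.F i u' = some v → u = u')
  (hacyc : ∀ (i : ℕ) (v : K.V) (k : ℕ), 0 < k → optIter (K.F i) k v ≠ some v)

section HT

omit hinj
include hfin hacyc

theorem bdd_h_set (p : ℕ) (v : K.V) :
    BddAbove {k | (optIter (K.F p) k v).isSome = true} := by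
  have _i : Fintype K.V := Fintype.ofFinite K.V
  have : ∀ k ∈ {k | (optIter (K.F p) k v).isSome = true}, k ≤ Fintype.card K.V := by
    intro k hk
    by_contra hlt
    push_neg at hlt
    have hall : ∀ m : Fin (k+1), (optIter (K.F p) (m : ℕ) v).isSome :=
      fun m => isSome_of_le (Nat.le_of_lt_succ m.2) hk
    have hcard : Fintype.card K.V < Fintype.card (Fin (k+1)) := by simp; omega
    obtain ⟨m1, m2, hne, heq⟩ :=
      Fintype.exists_ne_map_eq_of_card_lt (fun m : Fin (k+1) =>
        (optIter (K.F p) (m : ℕ) v).get (hall m)) hcard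
    have key : ∀ (m1 m2 : Fin (k+1)), (m1 : ℕ) < (m2 : ℕ) →
        (optIter (K.F p) (m1 : ℕ) v).get (hall m1) =
          (optIter (K.F p) (m2 : ℕ) v).get (hall m2) → False := by
      intro m1 m2 hlt12 heq
      obtain ⟨x, hx⟩ := Option.isSome_iff_exists.mp (hall m1)
      have hx2 : optIter (K.F p) (m2 : ℕ) v = some x := by
        rw [← Option.some_get (hall m2), ← heq, Option.some_get (hall m1), hx]
      rw [show (m2 : ℕ) = (m1 : ℕ) + ((m2:ℕ) - (m1:ℕ)) by omega, optIter_add, hx] at hx2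
      exact hacyc p x ((m2:ℕ) - (m1:ℕ)) (by omega) (by simpa using hx2)
    have hvne : (m1 : ℕ) ≠ (m2 : ℕ) := fun h => hne (Fin.ext h)
    rcases lt_or_gt_of_ne hvne with h | h
    · exact key m1 m2 h heq
    · exact key m2 m1 h heq.symm
  exact ⟨Fintype.card K.V, this⟩

theorem bdd_t_set (p : ℕ) (v : K.V) :
    BddAbove {k | ∃ u, optIter (K.F p) k u = some v} := by
  have _i : Fintype K.V := Fintype.ofFinite K.V
  refine ⟨Fintype.card K.V, fun k hk => ?_⟩
  obtain ⟨u, hu⟩ := hk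
  by_contra hlt
  push_neg at hlt
  have hall : ∀ m : Fin (k+1), (optIter (K.F p) (m : ℕ) u).isSome := by
    intro m
    have := isSome_of_le (Nat.le_of_lt_succ m.2) (v := u) (by rw [hu]; rfl)
    exact this
  have hcard : Fintype.card K.V < Fintype.card (Fin (k+1)) := by simp; omega
  obtain ⟨m1, m2, hne, heq⟩ :=
    Fintype.exists_ne_map_eq_of_card_lt (fun m : Fin (k+1) =>
      (optIter (K.F p) (m : ℕ) u).get (hall m)) hcard
  have key : ∀ (m1 m2 : Fin (k+1)), (m1 : ℕ) < (m2 : ℕ) →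
      (optIter (K.F p) (m1 : ℕ) u).get (hall m1) =
        (optIter (K.F p) (m2 : ℕ) u).get (hall m2) → False := by
    intro m1 m2 hlt12 heq
    obtain ⟨x, hx⟩ := Option.isSome_iff_exists.mp (hall m1)
    have hx2 : optIter (K.F p) (m2 : ℕ) u = some x := by
      rw [← Option.some_get (hall m2), ← heq, Option.some_get (hall m1), hx]
    rw [show (m2 : ℕ) = (m1 : ℕ) + ((m2:ℕ) - (m1:ℕ)) by omega, optIter_add, hx] at hx2
    exact hacyc p x ((m2:ℕ) - (m1:ℕ)) (by omega) (by simpa using hx2)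
  have hvne : (m1 : ℕ) ≠ (m2 : ℕ) := fun h => hne (Fin.ext h)
  rcases lt_or_gt_of_ne hvne with h | h
  · exact key m1 m2 h heq
  · exact key m2 m1 h heq.symm

theorem h_spec {p : ℕ} {k : ℕ} {v : K.V} :
    (optIter (K.F p) k v).isSome = true ↔ k ≤ K.h p v := by
  have hne : {k | (optIter (K.F p) k v).isSome = true}.Nonempty := ⟨0, rfl⟩
  have hbdd := bdd_h_set hfin hacyc p v
  constructor
  · intro h; exact le_csSup hbdd h
  · intro h
    have hmem := Nat.sSup_mem hne hbdd
    exact isSome_of_le (le_trans h le_rfl) hmem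

theorem t_spec {p : ℕ} {k : ℕ} {v : K.V} :
    (∃ u, optIter (K.F p) k u = some v) ↔ k ≤ K.t p v := by
  have hne : {k | ∃ u, optIter (K.F p) k u = some v}.Nonempty := ⟨0, v, rfl⟩
  have hbdd := bdd_t_set hfin hacyc p v
  constructor
  · intro h; exact le_csSup hbdd h
  · intro h
    obtain ⟨u, hu⟩ := Nat.sSup_mem hne hbdd
    exact exists_of_le h hu

theorem h_pos_iff {p : ℕ} {v : K.V} : 1 ≤ K.h p v ↔ (K.F p v).isSome := by
  rw [← h_spec hfin hacyc]
  have : optIter (K.F p) 1 v = K.F p v := by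
    show (K.F p v).bind (optIter (K.F p) 0) = K.F p v
    cases K.F p v <;> rfl
  rw [this]

theorem t_pos_iff {p : ℕ} {v : K.V} : 1 ≤ K.t p v ↔ ∃ u, K.F p u = some v := by
  rw [← t_spec hfin hacyc]
  have : ∀ u, optIter (K.F p) 1 u = K.F p u := by
    intro u
    show (K.F p u).bind (optIter (K.F p) 0) = K.F p u
    cases K.F p u <;> rfl
  constructor
  · rintro ⟨u, hu⟩; exact ⟨u, by rw [← this]; exact hu⟩
  · rintro ⟨u, hu⟩; exact ⟨u, by rw [this]; exact hu⟩

theorem h_step {p : ℕ} {u v : K.V} (huv : K.F p u = some v) :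
    K.h p u = K.h p v + 1 := by
  have le1 : K.h p v + 1 ≤ K.h p u := by
    rw [← h_spec hfin hacyc]
    show (optIter (K.F p) (K.h p v + 1) u).isSome = true
    have : optIter (K.F p) (K.h p v + 1) u = optIter (K.F p) (K.h p v) v := by
      show (K.F p u).bind _ = _
      rw [huv]; rfl
    rw [this]
    exact (h_spec hfin hacyc).mpr le_rfl
  have le2 : K.h p u ≤ K.h p v + 1 := by
    rcases Nat.eq_zero_or_pos (K.h p u) with h0 | h0
    · omega
    · obtain ⟨m, hm⟩ : ∃ m, K.h p u = m + 1 := ⟨K.h p u - 1, by omega⟩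
      have : (optIter (K.F p) (m+1) u).isSome = true :=
        (h_spec hfin hacyc).mpr (by omega)
      have h2 : (optIter (K.F p) m v).isSome = true := by
        have e : optIter (K.F p) (m+1) u = optIter (K.F p) m v := by
          show (K.F p u).bind _ = _
          rw [huv]; rfl
        rw [← e]; exact this
      have := (h_spec hfin hacyc).mp h2
      omega
  omega

end HT

section TT

omit hfin hacyc in
theorem iter_one {p : ℕ} (u : K.V) : optIter (K.F p) 1 u = K.F p u := by
  show (K.F p u).bind (optIter (K.F p) 0) = K.F p u
  cases K.F p u <;> rfl

include hfin hinj hacyc in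
theorem t_step {p : ℕ} {u v : K.V} (huv : K.F p u = some v) :
    K.t p v = K.t p u + 1 := by
  have le1 : K.t p u + 1 ≤ K.t p v := by
    rw [← t_spec hfin hacyc]
    obtain ⟨u0, hu0⟩ := (t_spec hfin hacyc).mpr (le_refl (K.t p u))
    refine ⟨u0, ?_⟩
    rw [optIter_succ', hu0]
    simpa using huv
  have le2 : K.t p v ≤ K.t p u + 1 := by
    obtain ⟨u0, hu0⟩ := (t_spec hfin hacyc).mpr (le_refl (K.t p v))
    have hpos : 1 ≤ K.t p v := by
      rw [← t_spec hfin hacyc]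
      exact ⟨u, by rw [iter_one]; exact huv⟩
    obtain ⟨m, hm⟩ : ∃ m, K.t p v = m + 1 := ⟨K.t p v - 1, by omega⟩
    rw [hm, optIter_succ'] at hu0
    rcases Option.bind_eq_some_iff.mp hu0 with ⟨w, hw1, hw2⟩
    have hwu : w = u := hinj p w u v hw2 huv
    have : m ≤ K.t p w := (t_spec hfin hacyc).mp ⟨u0, hw1⟩
    rw [hwu] at this
    omega
  omega

end TT

section Sigma

variable (n : ℕ) (σ : K.V → K.V) (hσb : Function.Bijective σ)
  (hσ : ∀ (i : ℕ) (u v : K.V), K.F i u = some v ↔ K.F (2 * n - i) (σ u) = some (σ v))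

include hσb hσ in
theorem optIter_sigma {p : ℕ} {k : ℕ} {u w : K.V} :
    optIter (K.F p) k u = some w ↔ optIter (K.F (2*n-p)) k (σ u) = some (σ w) := by
  induction k generalizing u with
  | zero =>
    show some u = some w ↔ some (σ u) = some (σ w)
    constructor
    · rintro h; injection h with h; rw [h]
    · rintro h; injection h with h; rw [hσb.1 h]
  | succ k ih =>
    show (K.F p u).bind _ = some w ↔ (K.F (2*n-p) (σ u)).bind _ = some (σ w)
    constructor
    · intro h
      rcases Option.bind_eq_some_iff.mp h with ⟨x, hx1, hx2⟩
      exact Option.bind_eq_some_iff.mpr ⟨σ x, (hσ p u x).mp hx1, ih.mp hx2⟩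
    · intro h
      rcases Option.bind_eq_some_iff.mp h with ⟨y, hy1, hy2⟩
      obtain ⟨x, rfl⟩ := hσb.2 y
      exact Option.bind_eq_some_iff.mpr ⟨x, (hσ p u x).mpr hy1, ih.mpr hy2⟩

include hσb hσ in
theorem h_sigma (p : ℕ) (u : K.V) : K.h (2*n-p) (σ u) = K.h p u := by
  unfold PreGraph.h
  congr 1
  ext k
  simp only [Set.mem_setOf_eq]
  constructor
  · intro hk
    obtain ⟨w, hw⟩ := Option.isSome_iff_exists.mp hk
    obtain ⟨w', rfl⟩ := hσb.2 w
    rw [(optIter_sigma n σ hσb hσ).mpr hw]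
    rfl
  · intro hk
    obtain ⟨w, hw⟩ := Option.isSome_iff_exists.mp hk
    rw [(optIter_sigma n σ hσb hσ).mp hw]
    rfl

include hσb hσ in
theorem t_sigma (p : ℕ) (u : K.V) : K.t (2*n-p) (σ u) = K.t p u := by
  unfold PreGraph.t
  congr 1
  ext k
  simp only [Set.mem_setOf_eq]
  constructor
  · rintro ⟨u0, hu0⟩
    obtain ⟨u1, rfl⟩ := hσb.2 u0
    exact ⟨u1, (optIter_sigma n σ hσb hσ).mpr hu0⟩
  · rintro ⟨u0, hu0⟩
    exact ⟨σ u0, (optIter_sigma n σ hσb hσ).mp hu0⟩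

end Sigma

include hinj in
theorem Finv_eq_iff {p : ℕ} {u v : K.V} : K.Finv p v = some u ↔ K.F p u = some v := by
  unfold PreGraph.Finv
  split
  case isTrue h =>
    constructor
    · intro he
      injection he with he
      rw [← he]
      exact h.choose_spec
    · intro hf
      have : h.choose = u := hinj p _ u v h.choose_spec hf
      rw [this]
  case isFalse h =>
    constructor
    · intro he; exact absurd he (by simp)
    · intro hf; exact absurd ⟨u, hf⟩ h

end AuxLemmas

section WordLemmas

variable {V : Type}

/-- Apply a list of operators (head first) to an optional vertex. -/
def appW (g : ℕ → V → Option V) (l : List ℕ) (s : Option V) : Option V :=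
  l.foldl (fun s a => s.bind (g a)) s

theorem appW_nil (g : ℕ → V → Option V) (s : Option V) : appW g [] s = s := rfl

theorem appW_cons (g : ℕ → V → Option V) (a : ℕ) (l : List ℕ) (s : Option V) :
    appW g (a :: l) s = appW g l (s.bind (g a)) := rfl

theorem appW_append (g : ℕ → V → Option V) (l1 l2 : List ℕ) (s : Option V) :
    appW g (l1 ++ l2) s = appW g l2 (appW g l1 s) := List.foldl_append ..

theorem appW_some {g : ℕ → V → Option V} {l : List ℕ} {s : Option V} {w : V}
    (h : appW g l s = some w) : ∃ x, s = some x := by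
  induction l generalizing s with
  | nil => exact ⟨w, h⟩
  | cons a l ih =>
    rw [appW_cons] at h
    obtain ⟨x, hx⟩ := ih h
    rcases Option.bind_eq_some_iff.mp hx with ⟨y, hy, _⟩
    exact ⟨y, hy⟩

theorem appW_split {g : ℕ → V → Option V} {l1 l2 : List ℕ} {s : Option V} {W : V}
    (h : appW g (l1 ++ l2) s = some W) :
    ∃ m, appW g l1 s = some m ∧ appW g l2 (some m) = some W := by
  rw [appW_append] at h
  obtain ⟨m, hm⟩ := appW_some h
  rw [hm] at h
  exact ⟨m, hm, h⟩

theorem swap_word {g : ℕ → V → Option V} {a b : ℕ}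
    (hswap : ∀ (x : V) (z : V), (g a x).bind (g b) = some z → (g b x).bind (g a) = some z)
    (l1 l2 : List ℕ) {s : Option V} {W : V}
    (h : appW g (l1 ++ a :: b :: l2) s = some W) :
    appW g (l1 ++ b :: a :: l2) s = some W := by
  rw [appW_append] at h ⊢
  set s1 := appW g l1 s with hs1
  rw [appW_cons, appW_cons] at h ⊢
  obtain ⟨t, ht⟩ := appW_some h
  rw [ht] at h
  rcases Option.bind_eq_some_iff.mp ht with ⟨x, hx1, hx2⟩
  rcases Option.bind_eq_some_iff.mp hx1 with ⟨y, hy1, hy2⟩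
  have h2 : (g a y).bind (g b) = some t := by rw [hy2]; simpa using hx2
  have h3 := hswap y t h2
  rw [hy1]
  have h4 : ((some y).bind (g b)).bind (g a) = some t := by simpa using h3
  rw [h4]
  exact h
end WordLemmas

section Crystal

open PreGraph

variable {K : PreGraph} {n : ℕ} (hn : 2 ≤ n) (hK : IsACrystal (2 * n - 1) K)
  {σ : K.V → K.V} (hσb : Function.Bijective σ)
  (hσ : ∀ (i : ℕ) (u v : K.V), K.F i u = some v ↔ K.F (2 * n - i) (σ u) = some (σ v))

include hK

theorem far_ht {p q : ℕ} (hp : p ∈ Set.Icc 1 (2*n-1)) (hq : q ∈ Set.Icc 1 (2*n-1))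
    (hfar : Far p q) {u v : K.V} (huv : K.F p u = some v) :
    K.h q v = K.h q u ∧ K.t q v = K.t q u := by
  have hne : p ≠ q := by rcases hfar with h|h <;> omega
  obtain ⟨h1, h2, h3⟩ := (hK.2.2.1 p hp q hq hne).1 u v huv
  have hnn : ¬ Neighb p q := by rintro (h|h) <;> rcases hfar with h'|h' <;> omega
  rw [if_neg hnn] at h3
  constructor <;> omega

theorem neighb_ht {p q : ℕ} (hp : p ∈ Set.Icc 1 (2*n-1)) (hq : q ∈ Set.Icc 1 (2*n-1))
    (hnb : Neighb p q) {u v : K.V} (huv : K.F p u = some v) :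
    K.t q v ≤ K.t q u ∧ K.h q u ≤ K.h q v ∧
      ((K.h q u : ℤ) - (K.t q u : ℤ)) - ((K.h q v : ℤ) - (K.t q v : ℤ)) = -1 := by
  have hne : p ≠ q := by rcases hnb with h|h <;> omega
  obtain ⟨h1, h2, h3⟩ := (hK.2.2.1 p hp q hq hne).1 u v huv
  rw [if_pos hnb] at h3
  exact ⟨h1, h2, h3⟩

theorem shuffle {p q : ℕ} (hp : p ∈ Set.Icc 1 (2*n-1)) (hq : q ∈ Set.Icc 1 (2*n-1))
    (hfar : Far p q) {x y z : K.V} (hxy : K.F p x = some y) (hyz : K.F q y = some z) :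
    ∃ y', K.F q x = some y' ∧ K.F p y' = some z := by
  have hfin := hK.1.1
  have hacyc := hK.1.2.2.2
  have hqx : (K.F q x).isSome := by
    rw [← h_pos_iff hfin hacyc]
    have h1 : 1 ≤ K.h q y := (h_pos_iff hfin hacyc).mpr (by rw [hyz]; rfl)
    have h2 := (far_ht hK hp hq hfar hxy).1
    omega
  obtain ⟨w, hw1, hw2⟩ := hK.2.2.2.2 p hp q hq hfar (K.F p) (Set.mem_insert _ _)
    (K.F q) (Set.mem_insert _ _) x (by rw [hxy]; rfl) hqx
  rw [hxy] at hw1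
  simp only [Option.bind_some] at hw1
  rw [hyz] at hw1
  injection hw1 with hw1
  rw [← hw1] at hw2
  exact Option.bind_eq_some_iff.mp hw2

theorem shuffle_inv {p q : ℕ} (hp : p ∈ Set.Icc 1 (2*n-1)) (hq : q ∈ Set.Icc 1 (2*n-1))
    (hfar : Far p q) {x y z : K.V} (hxz : K.F p x = some z) (hyz : K.F q y = some z) :
    ∃ w, K.F q w = some x ∧ K.F p w = some y := by
  have hinj := hK.1.2.2.1
  have hix : K.Finv p z = some x := (Finv_eq_iff hinj).mpr hxz
  have hiy : K.Finv q z = some y := (Finv_eq_iff hinj).mpr hyz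
  obtain ⟨w, hw1, hw2⟩ := hK.2.2.2.2 p hp q hq hfar (K.Finv p)
    (Set.mem_insert_of_mem _ rfl) (K.Finv q) (Set.mem_insert_of_mem _ rfl) z
    (by rw [hix]; rfl) (by rw [hiy]; rfl)
  rw [hix] at hw1
  rw [hiy] at hw2
  simp only [Option.bind_some] at hw1 hw2
  exact ⟨w, (Finv_eq_iff hinj).mp hw1, (Finv_eq_iff hinj).mp hw2⟩

include hn

theorem mem_range_base {p : ℕ} (hp1 : 1 ≤ p) (hpn : p < n) : p ∈ Set.Icc 1 (2*n-1) :=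
  Set.mem_Icc.mpr ⟨hp1, by omega⟩

theorem mem_range_mirror {p : ℕ} (hp1 : 1 ≤ p) (hpn : p < n) :
    2*n - p ∈ Set.Icc 1 (2*n-1) := Set.mem_Icc.mpr ⟨by omega, by omega⟩

theorem far_mirror {p : ℕ} (hp1 : 1 ≤ p) (hpn : p < n) : Far p (2*n-p) := by
  left; omega

include hσ

theorem sc_forward {p : ℕ} (hp1 : 1 ≤ p) (hpn : p < n) {u x : K.V}
    (hu : σ u = u) (hx : K.F p u = some x) :
    ∃ y, K.F (2*n-p) x = some y ∧ σ y = y := by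
  have hinj := hK.1.2.2.1
  have hσx : K.F (2*n-p) u = some (σ x) := by
    have := (hσ p u x).mp hx
    rwa [hu] at this
  obtain ⟨w, hw1, hw2⟩ := hK.2.2.2.2 p (mem_range_base hn hK hp1 hpn)
    (2*n-p) (mem_range_mirror hn hK hp1 hpn) (far_mirror hn hK hp1 hpn)
    (K.F p) (Set.mem_insert _ _) (K.F (2*n-p)) (Set.mem_insert _ _) u
    (by rw [hx]; rfl) (by rw [hσx]; rfl)
  rw [hx] at hw1
  rw [hσx] at hw2
  simp only [Option.bind_some] at hw1 hw2
  have e : 2*n - (2*n - p) = p := by omega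
  have h2 : K.F p (σ x) = some (σ w) := by
    have := (hσ (2*n-p) x w).mp hw1
    rwa [e] at this
  have : σ w = w := by
    rw [hw2] at h2
    injection h2 with h2
    exact h2.symm
  exact ⟨w, hw1, this⟩

theorem sc_backward {p : ℕ} (hp1 : 1 ≤ p) (hpn : p < n) {u : K.V}
    (hu : σ u = u) (ht : 1 ≤ K.t p u) :
    ∃ w y, σ w = w ∧ K.F p w = some y ∧ K.F (2*n-p) y = some u := by
  have hfin := hK.1.1
  have hinj := hK.1.2.2.1
  have hacyc := hK.1.2.2.2
  obtain ⟨x, hx⟩ := (t_pos_iff hfin hacyc).mp ht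
  have hz : K.F (2*n-p) (σ x) = some u := by
    have := (hσ p x u).mp hx
    rwa [hu] at this
  obtain ⟨w, hw1, hw2⟩ := shuffle_inv hK (mem_range_base hn hK hp1 hpn)
    (mem_range_mirror hn hK hp1 hpn) (far_mirror hn hK hp1 hpn) hx hz
  -- hw1 : K.F (2*n-p) w = some x, hw2 : K.F p w = some (σ x)
  have e : 2*n - (2*n - p) = p := by omega
  have h2 : K.F p (σ w) = some (σ x) := by
    have := (hσ (2*n-p) w x).mp hw1
    rwa [e] at this
  have hsw : σ w = w := hinj p (σ w) w (σ x) h2 hw2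
  -- need K.F p w = some y with K.F (2*n-p) y = some u : y = σ x
  exact ⟨w, σ x, hsw, hw2, hz⟩

end Crystal

section ExtractLayer

open PreGraph

theorem chainB_eq {K : PreGraph} {n p : ℕ} (hp1 : 1 ≤ p) (hpn : p < n) (x : K.V) :
    chainB K n p x = (K.F p x).bind (K.F (2*n-p)) := by
  unfold chainB
  rw [if_pos ⟨hp1, le_of_lt hpn⟩, if_neg (by omega)]

theorem extF_iff {K : PreGraph} {n : ℕ} {σ : K.V → K.V} {p : ℕ}
    {u w : (extractB K n σ).V} :
    (extractB K n σ).F p u = some w ↔ chainB K n p u.1 = some w.1 := by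
  show ((chainB K n p u.1).pbind _) = some w ↔ _
  refine Option.pbind_eq_some_iff.trans ?_
  constructor
  · rintro ⟨z, hz, hfz⟩
    split at hfz
    · injection hfz with hfz
      have hzw : z = w.1 := congrArg Subtype.val hfz
      rw [hz, hzw]
    · exact absurd hfz (by simp)
  · intro h
    refine ⟨w.1, Option.mem_def.mpr h, ?_⟩
    rw [dif_pos w.2]
    exact congrArg some (Subtype.ext rfl)

theorem subF_iff {L : PreGraph} {I : Set ℕ} {v : L.V} {p : ℕ} (hp : p ∈ I)
    {u w : (L.sub I v).V} :
    (L.sub I v).F p u = some w ↔ L.F p u.1 = some w.1 := by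
  show (if hi : p ∈ I then _ else none) = some w ↔ _
  refine (iff_of_eq (congrArg (· = some w) (dif_pos hp))).trans ?_
  refine Option.pbind_eq_some_iff.trans ?_
  constructor
  · rintro ⟨z, hz, hfz⟩
    injection hfz with hfz
    have hzw : z = w.1 := congrArg Subtype.val hfz
    rw [hz, hzw]
  · intro h
    exact ⟨w.1, Option.mem_def.mpr h, congrArg some (Subtype.ext rfl)⟩

theorem subF_none {L : PreGraph} {I : Set ℕ} {v : L.V} {p : ℕ} (hp : p ∉ I)
    (u : (L.sub I v).V) : (L.sub I v).F p u = none := dif_neg hp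

theorem subF_mk {L : PreGraph} {I : Set ℕ} {v : L.V} {p : ℕ} (hp : p ∈ I)
    {u : (L.sub I v).V} {what : L.V} (h : L.F p u.1 = some what) :
    ∃ w : (L.sub I v).V, (L.sub I v).F p u = some w ∧ w.1 = what := by
  have hmem : inComp L I v what := Relation.ReflTransGen.tail u.2 ⟨p, hp, Or.inl h⟩
  exact ⟨⟨what, hmem⟩, (subF_iff hp).mpr h, rfl⟩

end ExtractLayer

theorem DA4swap {K : PreGraph} {n : ℕ} (hK : IsACrystal (2 * n - 1) K)
    {a b : ℕ} (ha : a ∈ Set.Icc 1 (2*n-1)) (hb : b ∈ Set.Icc 1 (2*n-1)) (hab : Far a b) :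
    ∀ (x z : K.V), (K.F a x).bind (K.F b) = some z → (K.F b x).bind (K.F a) = some z := by
  intro x z hxz
  rcases Option.bind_eq_some_iff.mp hxz with ⟨y, hy1, hy2⟩
  obtain ⟨y', h1, h2⟩ := shuffle hK ha hb hab hy1 hy2
  rw [h1]
  simpa using h2

theorem DA4swapInv {K : PreGraph} {n : ℕ} (hK : IsACrystal (2 * n - 1) K)
    {a b : ℕ} (ha : a ∈ Set.Icc 1 (2*n-1)) (hb : b ∈ Set.Icc 1 (2*n-1)) (hab : Far a b) :
    ∀ (x z : K.V), (K.Finv a x).bind (K.Finv b) = some z →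
      (K.Finv b x).bind (K.Finv a) = some z := by
  have hinj := hK.1.2.2.1
  have hba : Far b a := by rcases hab with h | h <;> [right; left] <;> omega
  intro x z hxz
  rcases Option.bind_eq_some_iff.mp hxz with ⟨y, hy1, hy2⟩
  have hy1' : K.F a y = some x := (Finv_eq_iff hinj).mp hy1
  have hy2' : K.F b z = some y := (Finv_eq_iff hinj).mp hy2
  obtain ⟨y', h1, h2⟩ := shuffle hK hb ha hba hy2' hy1'
  rw [(Finv_eq_iff hinj).mpr h2]
  simpa using (Finv_eq_iff hinj).mpr h1

section DLayer

open PreGraph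

variable {K : PreGraph} {n : ℕ} (hn : 2 ≤ n) (hK : IsACrystal (2 * n - 1) K)
  {σ : K.V → K.V} (hσb : Function.Bijective σ)
  (hσ : ∀ (i : ℕ) (u v : K.V), K.F i u = some v ↔ K.F (2 * n - i) (σ u) = some (σ v))
  {i j : ℕ} (hi1 : 1 ≤ i) (hin : i < n) (hj1 : 1 ≤ j) (hjn : j < n)
  {v : (extractB K n σ).V}

omit hn hK hσb hσ in
include hi1 hin hj1 hjn in
theorem pair_range {p : ℕ} (hp : p ∈ ({i, j} : Set ℕ)) : 1 ≤ p ∧ p < n := by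
  rcases Set.mem_insert_iff.mp hp with rfl | hp
  · exact ⟨hi1, hin⟩
  · rw [Set.mem_singleton_iff] at hp
    subst hp
    exact ⟨hj1, hjn⟩

theorem far_mirror' {p : ℕ} (hp1 : 1 ≤ p) (hpn : p < n) : Far (2*n-p) p := by
  right; omega

include hi1 hin hj1 hjn

theorem DF_iff {p : ℕ} (hp : p ∈ ({i, j} : Set ℕ))
    {u w : ((extractB K n σ).sub {i, j} v).V} :
    ((extractB K n σ).sub {i, j} v).F p u = some w ↔
      (K.F p u.1.1).bind (K.F (2*n-p)) = some w.1.1 := by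
  obtain ⟨hp1, hpn⟩ := pair_range hi1 hin hj1 hjn hp
  rw [subF_iff hp, extF_iff, chainB_eq hp1 hpn]

include hn hK hσb hσ

theorem Dstep_of_K {p : ℕ} (hp : p ∈ ({i, j} : Set ℕ))
    {u : ((extractB K n σ).sub {i, j} v).V} {what : K.V}
    (h : (K.F p u.1.1).bind (K.F (2*n-p)) = some what) :
    ∃ w : ((extractB K n σ).sub {i, j} v).V,
      w.1.1 = what ∧ ((extractB K n σ).sub {i, j} v).F p u = some w := by
  obtain ⟨hp1, hpn⟩ := pair_range hi1 hin hj1 hjn hp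
  rcases Option.bind_eq_some_iff.mp h with ⟨x, hx1, hx2⟩
  obtain ⟨y, hy1, hy2⟩ := sc_forward hn hK hσ hp1 hpn u.1.2 hx1
  have hyw : y = what := by rw [hy1] at hx2; injection hx2
  have hBF : (extractB K n σ).F p u.1 = some ⟨y, hy2⟩ := by
    refine extF_iff.mpr ?_
    rw [chainB_eq hp1 hpn, hx1]
    simpa using hy1
  have hmem : inComp (extractB K n σ) {i, j} v ⟨y, hy2⟩ :=
    Relation.ReflTransGen.tail u.2 ⟨p, hp, Or.inl hBF⟩
  exact ⟨⟨⟨y, hy2⟩, hmem⟩, hyw, (subF_iff hp).mpr hBF⟩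

theorem DF_isSome {p : ℕ} (hp : p ∈ ({i, j} : Set ℕ))
    {u : ((extractB K n σ).sub {i, j} v).V} :
    (((extractB K n σ).sub {i, j} v).F p u).isSome = true ↔ 1 ≤ K.h p u.1.1 := by
  obtain ⟨hp1, hpn⟩ := pair_range hi1 hin hj1 hjn hp
  have hfin := hK.1.1
  have hacyc := hK.1.2.2.2
  constructor
  · intro h
    obtain ⟨w, hw⟩ := Option.isSome_iff_exists.mp h
    rcases Option.bind_eq_some_iff.mp ((DF_iff hi1 hin hj1 hjn hp).mp hw) with ⟨x, hx1, _⟩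
    exact (h_pos_iff hfin hacyc).mpr (by rw [hx1]; rfl)
  · intro h
    obtain ⟨x, hx⟩ := Option.isSome_iff_exists.mp ((h_pos_iff hfin hacyc).mp h)
    obtain ⟨y, hy1, hy2⟩ := sc_forward hn hK hσ hp1 hpn u.1.2 hx
    obtain ⟨w, _, hw2⟩ := Dstep_of_K hn hK hσb hσ hi1 hin hj1 hjn hp
      (u := u) (what := y) (by rw [hx]; simpa using hy1)
    rw [hw2]; rfl

theorem Dback {p : ℕ} (hp : p ∈ ({i, j} : Set ℕ))
    {u : ((extractB K n σ).sub {i, j} v).V} (ht : 1 ≤ K.t p u.1.1) :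
    ∃ w : ((extractB K n σ).sub {i, j} v).V,
      ((extractB K n σ).sub {i, j} v).F p w = some u ∧
        K.t p w.1.1 + 1 = K.t p u.1.1 := by
  obtain ⟨hp1, hpn⟩ := pair_range hi1 hin hj1 hjn hp
  have hfin := hK.1.1
  have hinj := hK.1.2.2.1
  have hacyc := hK.1.2.2.2
  obtain ⟨w0, y, hw0S, hw0y, hyu⟩ := sc_backward hn hK hσ hp1 hpn u.1.2 ht
  have hBF : (extractB K n σ).F p ⟨w0, hw0S⟩ = some u.1 := by
    refine extF_iff.mpr ?_
    rw [chainB_eq hp1 hpn, hw0y]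
    simpa using hyu
  have hmem : inComp (extractB K n σ) {i, j} v ⟨w0, hw0S⟩ :=
    Relation.ReflTransGen.tail u.2 ⟨p, hp, Or.inr hBF⟩
  refine ⟨⟨⟨w0, hw0S⟩, hmem⟩, ?_, ?_⟩
  · have := (subF_iff (v := v) hp (u := ⟨⟨w0, hw0S⟩, hmem⟩) (w := u)).mpr hBF
    exact this
  · have h1 : K.t p y = K.t p w0 + 1 := t_step hfin hinj hacyc hw0y
    have h2 : K.t p u.1.1 = K.t p y :=
      (far_ht hK (mem_range_mirror hn hK hp1 hpn) (mem_range_base hn hK hp1 hpn)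
        (far_mirror' hp1 hpn) hyu).2
    show K.t p w0 + 1 = K.t p u.1.1
    omega

theorem Dh_eq {p : ℕ} (hp : p ∈ ({i, j} : Set ℕ))
    (u : ((extractB K n σ).sub {i, j} v).V) :
    ((extractB K n σ).sub {i, j} v).h p u = K.h p u.1.1 := by
  obtain ⟨hp1, hpn⟩ := pair_range hi1 hin hj1 hjn hp
  have hfin := hK.1.1
  have hinj := hK.1.2.2.1
  have hacyc := hK.1.2.2.2
  have claim : ∀ (k : ℕ) (u : ((extractB K n σ).sub {i, j} v).V),
      (optIter (((extractB K n σ).sub {i, j} v).F p) k u).isSome = true ↔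
        k ≤ K.h p u.1.1 := by
    intro k
    induction k with
    | zero =>
      intro u
      constructor
      · intro _; exact Nat.zero_le _
      · intro _; rfl
    | succ k ih =>
      intro u
      by_cases h1 : 1 ≤ K.h p u.1.1
      · obtain ⟨w, hw⟩ := Option.isSome_iff_exists.mp
          ((DF_isSome hn hK hσb hσ hi1 hin hj1 hjn hp).mpr h1)
        rcases Option.bind_eq_some_iff.mp ((DF_iff hi1 hin hj1 hjn hp).mp hw) with ⟨x, hx1, hx2⟩
        have e1 : K.h p u.1.1 = K.h p x + 1 := h_step hfin hacyc hx1
        have e2 : K.h p w.1.1 = K.h p x :=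
          (far_ht hK (mem_range_mirror hn hK hp1 hpn) (mem_range_base hn hK hp1 hpn)
            (far_mirror' hp1 hpn) hx2).1
        have estep : optIter (((extractB K n σ).sub {i, j} v).F p) (k+1) u =
            optIter (((extractB K n σ).sub {i, j} v).F p) k w := by
          show (((extractB K n σ).sub {i, j} v).F p u).bind _ = _
          rw [hw]
          simp
        rw [estep, ih w]
        omega
      · have hnone : ((extractB K n σ).sub {i, j} v).F p u = none := by
          cases hD : ((extractB K n σ).sub {i, j} v).F p u with
          | none => rfl
          | some w =>
            exact absurd ((DF_isSome hn hK hσb hσ hi1 hin hj1 hjn hp).mp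
              (by rw [hD]; rfl)) h1
        have estep : optIter (((extractB K n σ).sub {i, j} v).F p) (k+1) u = none := by
          show (((extractB K n σ).sub {i, j} v).F p u).bind _ = _
          rw [hnone]
          rfl
        rw [estep]
        constructor
        · intro h; exact absurd h (by simp)
        · intro h; omega
  show sSup _ = _
  have : {k | (optIter (((extractB K n σ).sub {i, j} v).F p) k u).isSome = true} =
      Set.Iic (K.h p u.1.1) := Set.ext fun k => by rw [Set.mem_Iic]; exact claim k u
  rw [this, csSup_Iic]

theorem Dt_eq {p : ℕ} (hp : p ∈ ({i, j} : Set ℕ))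
    (u : ((extractB K n σ).sub {i, j} v).V) :
    ((extractB K n σ).sub {i, j} v).t p u = K.t p u.1.1 := by
  obtain ⟨hp1, hpn⟩ := pair_range hi1 hin hj1 hjn hp
  have hfin := hK.1.1
  have hinj := hK.1.2.2.1
  have hacyc := hK.1.2.2.2
  have claim : ∀ (k : ℕ) (u : ((extractB K n σ).sub {i, j} v).V),
      (∃ u0, optIter (((extractB K n σ).sub {i, j} v).F p) k u0 = some u) ↔
        k ≤ K.t p u.1.1 := by
    intro k
    induction k with
    | zero =>
      intro u
      constructor
      · intro _; exact Nat.zero_le _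
      · intro _; exact ⟨u, rfl⟩
    | succ k ih =>
      intro u
      constructor
      · rintro ⟨u0, hu0⟩
        rw [optIter_succ'] at hu0
        rcases Option.bind_eq_some_iff.mp hu0 with ⟨w, hw1, hw2⟩
        rcases Option.bind_eq_some_iff.mp ((DF_iff hi1 hin hj1 hjn hp).mp hw2) with ⟨y, hy1, hy2⟩
        have e1 : K.t p y = K.t p w.1.1 + 1 := t_step hfin hinj hacyc hy1
        have e2 : K.t p u.1.1 = K.t p y :=
          (far_ht hK (mem_range_mirror hn hK hp1 hpn) (mem_range_base hn hK hp1 hpn)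
            (far_mirror' hp1 hpn) hy2).2
        have : k ≤ K.t p w.1.1 := (ih w).mp ⟨u0, hw1⟩
        omega
      · intro h
        obtain ⟨w, hw1, hw2⟩ := Dback hn hK hσb hσ hi1 hin hj1 hjn hp
          (u := u) (by omega)
        obtain ⟨u0, hu0⟩ := (ih w).mpr (by omega)
        refine ⟨u0, ?_⟩
        rw [optIter_succ', hu0]
        simpa using hw1
  show sSup _ = _
  have : {k | ∃ u0, optIter (((extractB K n σ).sub {i, j} v).F p) k u0 = some u} =
      Set.Iic (K.t p u.1.1) := Set.ext fun k => by rw [Set.mem_Iic]; exact claim k u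
  rw [this, csSup_Iic]

theorem Dinj {p : ℕ} (hp : p ∈ ({i, j} : Set ℕ))
    {w1 w2 x : ((extractB K n σ).sub {i, j} v).V}
    (h1 : ((extractB K n σ).sub {i, j} v).F p w1 = some x)
    (h2 : ((extractB K n σ).sub {i, j} v).F p w2 = some x) : w1 = w2 := by
  have hinj := hK.1.2.2.1
  rcases Option.bind_eq_some_iff.mp ((DF_iff hi1 hin hj1 hjn hp).mp h1) with ⟨y1, hy1, hy1'⟩
  rcases Option.bind_eq_some_iff.mp ((DF_iff hi1 hin hj1 hjn hp).mp h2) with ⟨y2, hy2, hy2'⟩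
  have : y1 = y2 := hinj (2*n-p) y1 y2 x.1.1 hy1' hy2'
  subst this
  exact Subtype.ext (Subtype.ext (hinj p w1.1.1 w2.1.1 y1 hy1 hy2))

theorem DFinv_iff {p : ℕ} (hp : p ∈ ({i, j} : Set ℕ))
    {x w : ((extractB K n σ).sub {i, j} v).V} :
    ((extractB K n σ).sub {i, j} v).Finv p x = some w ↔
      ((extractB K n σ).sub {i, j} v).F p w = some x := by
  unfold PreGraph.Finv
  split
  case isTrue h =>
    constructor
    · intro he
      injection he with he
      rw [← he]
      exact h.choose_spec
    · intro hf
      have : h.choose = w := Dinj hn hK hσb hσ hi1 hin hj1 hjn hp h.choose_spec hf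
      rw [this]
  case isFalse h =>
    constructor
    · intro he; exact absurd he (by simp)
    · intro hf; exact absurd ⟨w, hf⟩ h

theorem Dstep_h {p : ℕ} (hp : p ∈ ({i, j} : Set ℕ))
    {u w : ((extractB K n σ).sub {i, j} v).V}
    (h : ((extractB K n σ).sub {i, j} v).F p u = some w) :
    K.h p u.1.1 = K.h p w.1.1 + 1 := by
  obtain ⟨hp1, hpn⟩ := pair_range hi1 hin hj1 hjn hp
  have hfin := hK.1.1
  have hacyc := hK.1.2.2.2
  rcases Option.bind_eq_some_iff.mp ((DF_iff hi1 hin hj1 hjn hp).mp h) with ⟨x, hx1, hx2⟩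
  have e1 : K.h p u.1.1 = K.h p x + 1 := h_step hfin hacyc hx1
  have e2 : K.h p w.1.1 = K.h p x :=
    (far_ht hK (mem_range_mirror hn hK hp1 hpn) (mem_range_base hn hK hp1 hpn)
      (far_mirror' hp1 hpn) hx2).1
  omega

omit hn hK hσb hσ hi1 hin hj1 hjn in
theorem h_mirror {n : ℕ} {σ : K.V → K.V} (hσb : Function.Bijective σ)
    (hσ : ∀ (i : ℕ) (u v : K.V), K.F i u = some v ↔ K.F (2 * n - i) (σ u) = some (σ v))
    {u : K.V} (hu : σ u = u) (p : ℕ) : K.h (2*n-p) u = K.h p u := by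
  conv_lhs => rw [← hu]
  exact h_sigma n σ hσb hσ p u

omit hn hK hσb hσ hi1 hin hj1 hjn in
theorem t_mirror {n : ℕ} {σ : K.V → K.V} (hσb : Function.Bijective σ)
    (hσ : ∀ (i : ℕ) (u v : K.V), K.F i u = some v ↔ K.F (2 * n - i) (σ u) = some (σ v))
    {u : K.V} (hu : σ u = u) (p : ℕ) : K.t (2*n-p) u = K.t p u := by
  conv_lhs => rw [← hu]
  exact t_sigma n σ hσb hσ p u

theorem DA2 {p q : ℕ} (hp : p ∈ ({i, j} : Set ℕ)) (hq : q ∈ ({i, j} : Set ℕ))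
    (hnb : Neighb p q) : A2at ((extractB K n σ).sub {i, j} v) p q := by
  obtain ⟨hp1, hpn⟩ := pair_range hi1 hin hj1 hjn hp
  obtain ⟨hq1, hqn⟩ := pair_range hi1 hin hj1 hjn hq
  have Rp := mem_range_base hn hK hp1 hpn
  have Rq := mem_range_base hn hK hq1 hqn
  have Rp' := mem_range_mirror hn hK hp1 hpn
  have hfar_p'p : Far (2*n-p) p := far_mirror' hp1 hpn
  have hfar_p'q : Far (2*n-p) q := by rcases hnb with h | h <;> (right; omega)
  have hne : p ≠ q := by rcases hnb with h | h <;> omega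
  constructor
  · intro u w hDF
    rcases Option.bind_eq_some_iff.mp ((DF_iff hi1 hin hj1 hjn hp).mp hDF) with ⟨x, hx1, hx2⟩
    obtain ⟨ht1, hh1, hi1'⟩ := neighb_ht hK Rp Rq hnb hx1
    obtain ⟨hh2, ht2⟩ := far_ht hK Rp' Rq hfar_p'q hx2
    rw [Dt_eq hn hK hσb hσ hi1 hin hj1 hjn hq, Dt_eq hn hK hσb hσ hi1 hin hj1 hjn hq,
      Dh_eq hn hK hσb hσ hi1 hin hj1 hjn hq, Dh_eq hn hK hσb hσ hi1 hin hj1 hjn hq,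
      if_pos hnb]
    refine ⟨by omega, by omega, by omega⟩
  · intro u w z hDF1 hDF2
    rcases Option.bind_eq_some_iff.mp ((DF_iff hi1 hin hj1 hjn hp).mp hDF1) with ⟨x1, hx1, hx2⟩
    rcases Option.bind_eq_some_iff.mp ((DF_iff hi1 hin hj1 hjn hp).mp hDF2) with ⟨x2, hy1, hy2⟩
    obtain ⟨y, hy3, hy4⟩ := shuffle hK Rp' Rp hfar_p'p hx2 hy1
    have hconv := (hK.2.2.1 p Rp q Rq hne).2 u.1.1 x1 y hx1 hy3
    have e1 : K.h q w.1.1 = K.h q x1 := (far_ht hK Rp' Rq hfar_p'q hx2).1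
    have e2 : K.h q x2 = K.h q y := (far_ht hK Rp' Rq hfar_p'q hy4).1
    have e3 : K.h q z.1.1 = K.h q x2 := (far_ht hK Rp' Rq hfar_p'q hy2).1
    rw [Dh_eq hn hK hσb hσ hi1 hin hj1 hjn hq, Dh_eq hn hK hσb hσ hi1 hin hj1 hjn hq,
      Dh_eq hn hK hσb hσ hi1 hin hj1 hjn hq]
    omega

theorem DA3 {p q : ℕ} (hp : p ∈ ({i, j} : Set ℕ)) (hq : q ∈ ({i, j} : Set ℕ))
    (hnb : Neighb p q) : A3at ((extractB K n σ).sub {i, j} v) p q := by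
  obtain ⟨hp1, hpn⟩ := pair_range hi1 hin hj1 hjn hp
  obtain ⟨hq1, hqn⟩ := pair_range hi1 hin hj1 hjn hq
  have hfin := hK.1.1
  have hinjK := hK.1.2.2.1
  have hacyc := hK.1.2.2.2
  have Rp := mem_range_base hn hK hp1 hpn
  have Rq := mem_range_base hn hK hq1 hqn
  have Rp' := mem_range_mirror hn hK hp1 hpn
  have Rq' := mem_range_mirror hn hK hq1 hqn
  have Fp'p : Far (2*n-p) p := far_mirror' hp1 hpn
  have Fq'q : Far (2*n-q) q := far_mirror' hq1 hqn
  have Fp'q : Far (2*n-p) q := by rcases hnb with h | h <;> (right; omega)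
  have Fq'p : Far (2*n-q) p := by rcases hnb with h | h <;> (right; omega)
  have Fpq' : Far p (2*n-q) := by rcases hnb with h | h <;> (left; omega)
  have Fqp' : Far q (2*n-p) := by rcases hnb with h | h <;> (left; omega)
  have hnb' : Neighb (2*n-p) (2*n-q) := by
    rcases hnb with h | h
    · right; omega
    · left; omega
  have hnb'2 : Neighb (2*n-q) (2*n-p) := by
    rcases hnb' with h | h
    · right; omega
    · left; omega
  have A3K := (hK.2.2.2.1 p Rp q Rq hnb).1
  have A3K' := (hK.2.2.2.1 (2*n-p) Rp' (2*n-q) Rq' hnb').1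
  constructor
  · -- first clause
    intro u w w' hDFp hDFq hlab
    rcases Option.bind_eq_some_iff.mp ((DF_iff hi1 hin hj1 hjn hp).mp hDFp) with ⟨x, hx1, hx2⟩
    rcases Option.bind_eq_some_iff.mp ((DF_iff hi1 hin hj1 hjn hq).mp hDFq) with ⟨y, hy1, hy2⟩
    rw [Dh_eq hn hK hσb hσ hi1 hin hj1 hjn hq, Dh_eq hn hK hσb hσ hi1 hin hj1 hjn hq] at hlab
    have e1 : K.h q w.1.1 = K.h q x := (far_ht hK Rp' Rq Fp'q hx2).1
    have hlabK : K.h q x = K.h q u.1.1 := by omega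
    obtain ⟨hstep, w0, hw01, hw02⟩ := A3K.1 u.1.1 x y hx1 hy1 hlabK
    have hstepN : K.h p y = K.h p u.1.1 + 1 := by omega
    have e2 : K.h p w'.1.1 = K.h p y := (far_ht hK Rq' Rp Fq'p hy2).1
    constructor
    · rw [Dh_eq hn hK hσb hσ hi1 hin hj1 hjn hp, Dh_eq hn hK hσb hσ hi1 hin hj1 hjn hp]
      omega
    -- existence part
    have hql : 1 ≤ K.h q u.1.1 := (h_pos_iff hfin hacyc).mpr (by rw [hy1]; rfl)
    have hz1s : 1 ≤ K.h q w.1.1 := by omega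
    obtain ⟨z1, hz1⟩ := Option.isSome_iff_exists.mp
      ((DF_isSome hn hK hσb hσ hi1 hin hj1 hjn hq).mpr hz1s)
    have hz2s : 1 ≤ K.h p w'.1.1 := by omega
    obtain ⟨z2, hz2⟩ := Option.isSome_iff_exists.mp
      ((DF_isSome hn hK hσb hσ hi1 hin hj1 hjn hp).mpr hz2s)
    refine ⟨z1, hz1, ?_⟩
    -- show z2 = z1
    rcases Option.bind_eq_some_iff.mp ((DF_iff hi1 hin hj1 hjn hq).mp hz1) with ⟨m1, hm1, hm1'⟩
    rcases Option.bind_eq_some_iff.mp ((DF_iff hi1 hin hj1 hjn hp).mp hz2) with ⟨r1, hr1, hr1'⟩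
    obtain ⟨m, hma, hmb⟩ := shuffle hK Rp' Rq Fp'q hx2 hm1
    have hmw0 : m = w0 := by rw [hma] at hw01; injection hw01
    rw [hmw0] at hmb
    obtain ⟨r, hra, hrb⟩ := shuffle hK Rq' Rp Fq'p hy2 hr1
    have hrw0 : r = w0 := by rw [hra] at hw02; injection hw02
    rw [hrw0] at hrb
    -- label for A3K' at w0
    have l1 : K.h (2*n-q) w0 = K.h (2*n-q) x := (far_ht hK Rq Rq' (by left; omega) hw01).1
    have l2 : K.h (2*n-q) x = K.h (2*n-q) u.1.1 := (far_ht hK Rp Rq' Fpq' hx1).1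
    have l3 : K.h (2*n-q) u.1.1 = K.h q u.1.1 := h_mirror hσb hσ u.1.2 q
    have l4 : K.h (2*n-q) m1 = K.h (2*n-q) w.1.1 := (far_ht hK Rq Rq' (by left; omega) hm1).1
    have l5 : K.h (2*n-q) w.1.1 = K.h q w.1.1 := h_mirror hσb hσ w.1.2 q
    have hlab' : K.h (2*n-q) m1 = K.h (2*n-q) w0 := by omega
    obtain ⟨_, W, hW1, hW2⟩ := A3K'.1 w0 m1 r1 hmb hrb hlab'
    have eW1 : z1.1.1 = W := by rw [hm1'] at hW1; exact Option.some.inj hW1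
    have eW2 : z2.1.1 = W := by rw [hr1'] at hW2; exact Option.some.inj hW2
    have : z2 = z1 := Subtype.ext (Subtype.ext (by rw [eW1, eW2]))
    rw [← this]
    exact hz2
  · -- second clause
    intro u u' w hDFp hDFq hlab
    rcases Option.bind_eq_some_iff.mp ((DF_iff hi1 hin hj1 hjn hp).mp hDFp) with ⟨x, hx1, hx2⟩
    rcases Option.bind_eq_some_iff.mp ((DF_iff hi1 hin hj1 hjn hq).mp hDFq) with ⟨y', hy1, hy2⟩
    rw [Dh_eq hn hK hσb hσ hi1 hin hj1 hjn hq, Dh_eq hn hK hσb hσ hi1 hin hj1 hjn hq] at hlab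
    have hlabK : K.h q w.1.1 = K.h q u.1.1 + 1 := by omega
    -- apply A3 for (p', q') at w
    have l1 : K.h (2*n-q) w.1.1 = K.h q w.1.1 := h_mirror hσb hσ w.1.2 q
    have l2 : K.h (2*n-q) x = K.h (2*n-q) u.1.1 := (far_ht hK Rp Rq' Fpq' hx1).1
    have l3 : K.h (2*n-q) u.1.1 = K.h q u.1.1 := h_mirror hσb hσ u.1.2 q
    have hlab' : (K.h (2*n-q) w.1.1 : ℤ) - K.h (2*n-q) x = 1 := by omega
    obtain ⟨hh, w0, hw0a, hw0b⟩ := A3K'.2 x y' w.1.1 hx2 hy2 hlab'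
    constructor
    · -- h p w = h p u'
      have m1 : K.h (2*n-p) w.1.1 = K.h p w.1.1 := h_mirror hσb hσ w.1.2 p
      have m2 : K.h (2*n-p) y' = K.h (2*n-p) u'.1.1 := (far_ht hK Rq Rp' Fqp' hy1).1
      have m3 : K.h (2*n-p) u'.1.1 = K.h p u'.1.1 := h_mirror hσb hσ u'.1.2 p
      rw [Dh_eq hn hK hσb hσ hi1 hin hj1 hjn hp, Dh_eq hn hK hσb hσ hi1 hin hj1 hjn hp]
      omega
    -- existence
    have htq : 1 ≤ K.t q u.1.1 := by
      have t1 : K.t (2*n-q) w.1.1 = K.t (2*n-q) y' + 1 := t_step hfin hinjK hacyc hy2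
      have t2 : K.t (2*n-q) w.1.1 ≤ K.t (2*n-q) x := (neighb_ht hK Rp' Rq' hnb' hx2).1
      have t3 : K.t (2*n-q) x = K.t (2*n-q) u.1.1 := (far_ht hK Rp Rq' Fpq' hx1).2
      have t4 : K.t (2*n-q) u.1.1 = K.t q u.1.1 := t_mirror hσb hσ u.1.2 q
      omega
    obtain ⟨z, hzF, _⟩ := Dback hn hK hσb hσ hi1 hin hj1 hjn hq htq
    rcases Option.bind_eq_some_iff.mp ((DF_iff hi1 hin hj1 hjn hq).mp hzF) with ⟨y0, hy0a, hy0b⟩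
    have htp : 1 ≤ K.t p u'.1.1 := by
      have t1 : K.t (2*n-p) w.1.1 = K.t (2*n-p) x + 1 := t_step hfin hinjK hacyc hx2
      have t2 : K.t (2*n-p) w.1.1 ≤ K.t (2*n-p) y' := (neighb_ht hK Rq' Rp' hnb'2 hy2).1
      have t3 : K.t (2*n-p) y' = K.t (2*n-p) u'.1.1 := (far_ht hK Rq Rp' Fqp' hy1).2
      have t4 : K.t (2*n-p) u'.1.1 = K.t p u'.1.1 := t_mirror hσb hσ u'.1.2 p
      omega
    obtain ⟨z2, hz2F, _⟩ := Dback hn hK hσb hσ hi1 hin hj1 hjn hp htp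
    rcases Option.bind_eq_some_iff.mp ((DF_iff hi1 hin hj1 hjn hp).mp hz2F) with ⟨z2x, hz2a, hz2b⟩
    -- (a) F p y0 = w0
    obtain ⟨z1', hz1'a, hz1'b⟩ := shuffle hK Rq' Rp Fq'p hy0b hx1
    have hz1w0 : z1' = w0 := hinjK (2*n-q) z1' w0 x hz1'b hw0a
    rw [hz1w0] at hz1'a
    -- (b) F q z2x = w0
    obtain ⟨m1', hm1'a, hm1'b⟩ := shuffle hK Rp' Rq Fp'q hz2b hy1
    have hm1w0 : m1' = w0 := hinjK (2*n-p) m1' w0 y' hm1'b hw0b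
    rw [hm1w0] at hm1'a
    -- (c) label for A3K at w0
    have c1 : K.h q x = K.h q w0 := (far_ht hK Rq' Rq Fq'q hw0a).1
    have c2 : K.h q w.1.1 = K.h q x := (far_ht hK Rp' Rq Fp'q hx2).1
    have c3 : K.h q u.1.1 = K.h q y0 := (far_ht hK Rq' Rq Fq'q hy0b).1
    have clab : (K.h q w0 : ℤ) - K.h q y0 = 1 := by omega
    obtain ⟨_, W, hWa, hWb⟩ := A3K.2 y0 z2x w0 hz1'a hm1'a clab
    have eW : W = z.1.1 := hinjK q W z.1.1 y0 hWa hy0a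
    rw [eW] at hWb
    have ez : z.1.1 = z2.1.1 := hinjK p z.1.1 z2.1.1 z2x hWb hz2a
    have : z = z2 := Subtype.ext (Subtype.ext ez)
    exact ⟨z, hzF, by rw [this]; exact hz2F⟩

theorem Dbackinv {p : ℕ} (hp : p ∈ ({i, j} : Set ℕ))
    {x : ((extractB K n σ).sub {i, j} v).V} {what : K.V}
    (h : (K.Finv (2*n-p) x.1.1).bind (K.Finv p) = some what) :
    ∃ w : ((extractB K n σ).sub {i, j} v).V,
      w.1.1 = what ∧ ((extractB K n σ).sub {i, j} v).Finv p x = some w := by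
  obtain ⟨hp1, hpn⟩ := pair_range hi1 hin hj1 hjn hp
  have hfin := hK.1.1
  have hinjK := hK.1.2.2.1
  have hacyc := hK.1.2.2.2
  rcases Option.bind_eq_some_iff.mp h with ⟨y, hy1, hy2⟩
  have hFy : K.F (2*n-p) y = some x.1.1 := (Finv_eq_iff hinjK).mp hy1
  have hFw : K.F p what = some y := (Finv_eq_iff hinjK).mp hy2
  have ht : 1 ≤ K.t p x.1.1 := by
    have t1 : K.t p x.1.1 = K.t p y :=
      (far_ht hK (mem_range_mirror hn hK hp1 hpn) (mem_range_base hn hK hp1 hpn)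
        (far_mirror' hp1 hpn) hFy).2
    have t2 : K.t p y = K.t p what + 1 := t_step hfin hinjK hacyc hFw
    omega
  obtain ⟨w0, y0, hw0S, hw0y, hy0x⟩ := sc_backward hn hK hσ hp1 hpn x.1.2 ht
  have hy0y : y0 = y := hinjK (2*n-p) y0 y x.1.1 hy0x hFy
  rw [hy0y] at hw0y
  have hw0what : w0 = what := hinjK p w0 what y hw0y hFw
  rw [hw0what] at hw0S hw0y
  have hBF : (extractB K n σ).F p ⟨what, hw0S⟩ = some x.1 := by
    refine extF_iff.mpr ?_
    rw [chainB_eq hp1 hpn, hw0y]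
    simpa using hFy
  have hmem : inComp (extractB K n σ) {i, j} v ⟨what, hw0S⟩ :=
    Relation.ReflTransGen.tail x.2 ⟨p, hp, Or.inr hBF⟩
  refine ⟨⟨⟨what, hw0S⟩, hmem⟩, rfl, ?_⟩
  exact (DFinv_iff hn hK hσb hσ hi1 hin hj1 hjn hp).mpr ((subF_iff hp).mpr hBF)

theorem DA4 {p q : ℕ} (hp : p ∈ ({i, j} : Set ℕ)) (hq : q ∈ ({i, j} : Set ℕ))
    (hnb : Neighb p q) : A4at ((extractB K n σ).sub {i, j} v) p q := by
  obtain ⟨hp1, hpn⟩ := pair_range hi1 hin hj1 hjn hp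
  obtain ⟨hq1, hqn⟩ := pair_range hi1 hin hj1 hjn hq
  have hfin := hK.1.1
  have hinjK := hK.1.2.2.1
  have hacyc := hK.1.2.2.2
  have Rp := mem_range_base hn hK hp1 hpn
  have Rq := mem_range_base hn hK hq1 hqn
  have Rp' := mem_range_mirror hn hK hp1 hpn
  have Rq' := mem_range_mirror hn hK hq1 hqn
  have Fpp' : Far p (2*n-p) := far_mirror hn hK hp1 hpn
  have Fqq' : Far q (2*n-q) := far_mirror hn hK hq1 hqn
  have Fp'p : Far (2*n-p) p := far_mirror' hp1 hpn
  have Fq'q : Far (2*n-q) q := far_mirror' hq1 hqn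
  have Fp'q : Far (2*n-p) q := by rcases hnb with h | h <;> (right; omega)
  have Fq'p : Far (2*n-q) p := by rcases hnb with h | h <;> (right; omega)
  have Fpq' : Far p (2*n-q) := by rcases hnb with h | h <;> (left; omega)
  have Fqp' : Far q (2*n-p) := by rcases hnb with h | h <;> (left; omega)
  have hnb' : Neighb (2*n-p) (2*n-q) := by
    rcases hnb with h | h
    · right; omega
    · left; omega
  have A4K := (hK.2.2.2.1 p Rp q Rq hnb).2
  have A4K' := (hK.2.2.2.1 (2*n-p) Rp' (2*n-q) Rq' hnb').2
  constructor
  · -- first (forward) Verma clause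
    intro u w w' hDFp hDFq hlab1 hlab2
    rcases Option.bind_eq_some_iff.mp ((DF_iff hi1 hin hj1 hjn hp).mp hDFp) with ⟨x1, hx1, hx1'⟩
    rcases Option.bind_eq_some_iff.mp ((DF_iff hi1 hin hj1 hjn hq).mp hDFq) with ⟨y1, hy1, hy1'⟩
    rw [Dh_eq hn hK hσb hσ hi1 hin hj1 hjn hq, Dh_eq hn hK hσb hσ hi1 hin hj1 hjn hq] at hlab1
    rw [Dh_eq hn hK hσb hσ hi1 hin hj1 hjn hp, Dh_eq hn hK hσb hσ hi1 hin hj1 hjn hp] at hlab2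
    have e1 : K.h q w.1.1 = K.h q x1 := (far_ht hK Rp' Rq Fp'q hx1').1
    have e2 : K.h p w'.1.1 = K.h p y1 := (far_ht hK Rq' Rp Fq'p hy1').1
    have lab1K : (K.h q x1 : ℤ) - K.h q u.1.1 = 1 := by omega
    have lab2K : (K.h p y1 : ℤ) - K.h p u.1.1 = 1 := by omega
    obtain ⟨z, hC1, hC2⟩ := A4K.1 u.1.1 x1 y1 hx1 hy1 lab1K lab2K
    -- decompose the two chains
    rcases Option.bind_eq_some_iff.mp hC1 with ⟨x3, hX3, hzs⟩
    rcases Option.bind_eq_some_iff.mp hX3 with ⟨x2, hX2, hx3s⟩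
    rcases Option.bind_eq_some_iff.mp hX2 with ⟨x1b, hx1b, hx2s⟩
    have hx1bb : x1b = x1 := by rw [hx1] at hx1b; exact (Option.some.inj hx1b).symm
    rw [hx1bb] at hx2s
    rcases Option.bind_eq_some_iff.mp hC2 with ⟨y3, hY3, hzs2⟩
    rcases Option.bind_eq_some_iff.mp hY3 with ⟨y2, hY2, hy3s⟩
    rcases Option.bind_eq_some_iff.mp hY2 with ⟨y1b, hy1b, hy2s⟩
    have hy1bb : y1b = y1 := by rw [hy1] at hy1b; exact (Option.some.inj hy1b).symm
    rw [hy1bb] at hy2s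
    -- h of primed colors is invariant along the unprimed chains
    have hpz : K.h (2*n-p) z = K.h p u.1.1 := by
      have i1 := (far_ht hK Rp Rp' Fpp' hx1).1
      have i2 := (far_ht hK Rq Rp' Fqp' hx2s).1
      have i3 := (far_ht hK Rq Rp' Fqp' hx3s).1
      have i4 := (far_ht hK Rp Rp' Fpp' hzs).1
      have i5 := h_mirror hσb hσ u.1.2 p
      omega
    have hqz : K.h (2*n-q) z = K.h q u.1.1 := by
      have i1 := (far_ht hK Rp Rq' Fpq' hx1).1
      have i2 := (far_ht hK Rq Rq' Fqq' hx2s).1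
      have i3 := (far_ht hK Rq Rq' Fqq' hx3s).1
      have i4 := (far_ht hK Rp Rq' Fpq' hzs).1
      have i5 := h_mirror hσb hσ u.1.2 q
      omega
    have hpu : 1 ≤ K.h p u.1.1 := (h_pos_iff hfin hacyc).mpr (by rw [hx1]; rfl)
    have hqu : 1 ≤ K.h q u.1.1 := (h_pos_iff hfin hacyc).mpr (by rw [hy1]; rfl)
    obtain ⟨m1, hm1⟩ := Option.isSome_iff_exists.mp
      ((h_pos_iff hfin hacyc).mp (by omega : 1 ≤ K.h (2*n-p) z))
    obtain ⟨m2, hm2⟩ := Option.isSome_iff_exists.mp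
      ((h_pos_iff hfin hacyc).mp (by omega : 1 ≤ K.h (2*n-q) z))
    -- push the p'-edge to the bottom of the first chain
    obtain ⟨e3, he3a, he3b⟩ := shuffle hK Rp Rp' Fpp' hzs hm1
    obtain ⟨e2, he2a, he2b⟩ := shuffle hK Rq Rp' Fqp' hx3s he3a
    obtain ⟨e1, he1a, he1b⟩ := shuffle hK Rq Rp' Fqp' hx2s he2a
    obtain ⟨e0, he0a, he0b⟩ := shuffle hK Rp Rp' Fpp' hx1 he1a
    have hσ1 : K.F (2*n-p) u.1.1 = some (σ x1) := by
      have := (hσ p u.1.1 x1).mp hx1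
      rwa [u.1.2] at this
    have he0σ : e0 = σ x1 := by rw [he0a] at hσ1; exact Option.some.inj hσ1
    have lab1' : (K.h (2*n-q) m1 : ℤ) - K.h (2*n-q) z = 1 := by
      have i1 := (far_ht hK Rp Rq' Fpq' he3b).1
      have i2 := (far_ht hK Rq Rq' Fqq' he2b).1
      have i3 := (far_ht hK Rq Rq' Fqq' he1b).1
      have i4 := (far_ht hK Rp Rq' Fpq' he0b).1
      have i5 : K.h (2*n-q) e0 = K.h q x1 := by rw [he0σ]; exact h_sigma n σ hσb hσ q x1
      omega
    -- push the q'-edge to the bottom of the second chain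
    obtain ⟨f3, hf3a, hf3b⟩ := shuffle hK Rq Rq' Fqq' hzs2 hm2
    obtain ⟨f2, hf2a, hf2b⟩ := shuffle hK Rp Rq' Fpq' hy3s hf3a
    obtain ⟨f1, hf1a, hf1b⟩ := shuffle hK Rp Rq' Fpq' hy2s hf2a
    obtain ⟨f0, hf0a, hf0b⟩ := shuffle hK Rq Rq' Fqq' hy1 hf1a
    have hσ2 : K.F (2*n-q) u.1.1 = some (σ y1) := by
      have := (hσ q u.1.1 y1).mp hy1
      rwa [u.1.2] at this
    have hf0σ : f0 = σ y1 := by rw [hf0a] at hσ2; exact Option.some.inj hσ2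
    have lab2' : (K.h (2*n-p) m2 : ℤ) - K.h (2*n-p) z = 1 := by
      have i1 := (far_ht hK Rq Rp' Fqp' hf3b).1
      have i2 := (far_ht hK Rp Rp' Fpp' hf2b).1
      have i3 := (far_ht hK Rp Rp' Fpp' hf1b).1
      have i4 := (far_ht hK Rq Rp' Fqp' hf0b).1
      have i5 : K.h (2*n-p) f0 = K.h p y1 := by rw [hf0σ]; exact h_sigma n σ hσb hσ p y1
      omega
    obtain ⟨W, hP1, hP2⟩ := A4K'.1 z m1 m2 hm1 hm2 lab1' lab2'
    -- the two full words
    have T1 : appW K.F ([p,q,q,p] ++ [2*n-p,2*n-q,2*n-q,2*n-p]) (some u.1.1) = some W := by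
      rw [appW_append]
      have h1 : appW K.F [p,q,q,p] (some u.1.1) = some z := hC1
      rw [h1]
      exact hP1
    have T2 : appW K.F ([q,p,p,q] ++ [2*n-q,2*n-p,2*n-p,2*n-q]) (some u.1.1) = some W := by
      rw [appW_append]
      have h1 : appW K.F [q,p,p,q] (some u.1.1) = some z := hC2
      rw [h1]
      exact hP2
    -- reorder the first word to the interleaved form
    have s1 := swap_word (DA4swap hK Rp Rp' Fpp') [p,q,q] [2*n-q,2*n-q,2*n-p] T1
    have s2 := swap_word (DA4swap hK Rq Rp' Fqp') [p,q] [p,2*n-q,2*n-q,2*n-p] s1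
    have s3 := swap_word (DA4swap hK Rq Rp' Fqp') [p] [q,p,2*n-q,2*n-q,2*n-p] s2
    have s4 := swap_word (DA4swap hK Rp Rq' Fpq') [p,2*n-p,q,q] [2*n-q,2*n-p] s3
    have s5 := swap_word (DA4swap hK Rq Rq' Fqq') [p,2*n-p,q] [p,2*n-q,2*n-p] s4
    have s6 := swap_word (DA4swap hK Rp Rq' Fpq') [p,2*n-p,q,2*n-q,q] [2*n-p] s5
    -- s6 : appW K.F [p,p',q,q',q,q',p,p'] (some û) = some W
    have t1 := swap_word (DA4swap hK Rq Rq' Fqq') [q,p,p] [2*n-p,2*n-p,2*n-q] T2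
    have t2 := swap_word (DA4swap hK Rp Rq' Fpq') [q,p] [q,2*n-p,2*n-p,2*n-q] t1
    have t3 := swap_word (DA4swap hK Rp Rq' Fpq') [q] [p,q,2*n-p,2*n-p,2*n-q] t2
    have t4 := swap_word (DA4swap hK Rq Rp' Fqp') [q,2*n-q,p,p] [2*n-p,2*n-q] t3
    have t5 := swap_word (DA4swap hK Rp Rp' Fpp') [q,2*n-q,p] [q,2*n-p,2*n-q] t4
    have t6 := swap_word (DA4swap hK Rq Rp' Fqp') [q,2*n-q,p,2*n-p,p] [2*n-q] t5
    -- convert to D-chains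
    obtain ⟨g1, hg1, hrest1⟩ := appW_split (l1 := [p, 2*n-p])
      (l2 := [q,2*n-q,q,2*n-q,p,2*n-p]) s6
    obtain ⟨g2, hg2, hrest2⟩ := appW_split (l1 := [q, 2*n-q])
      (l2 := [q,2*n-q,p,2*n-p]) hrest1
    obtain ⟨g3, hg3, hrest3⟩ := appW_split (l1 := [q, 2*n-q]) (l2 := [p,2*n-p]) hrest2
    obtain ⟨w1, hw1e, hw1D⟩ := Dstep_of_K hn hK hσb hσ hi1 hin hj1 hjn hp (u := u) hg1
    have hw1w : w1 = w := Option.some.inj (hw1D.symm.trans hDFp)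
    rw [← hw1e] at hg2
    obtain ⟨w2, hw2e, hw2D⟩ := Dstep_of_K hn hK hσb hσ hi1 hin hj1 hjn hq (u := w1) hg2
    rw [hw1w] at hw2D
    rw [← hw2e] at hg3
    obtain ⟨w3, hw3e, hw3D⟩ := Dstep_of_K hn hK hσb hσ hi1 hin hj1 hjn hq (u := w2) hg3
    rw [← hw3e] at hrest3
    obtain ⟨w4, hw4e, hw4D⟩ := Dstep_of_K hn hK hσb hσ hi1 hin hj1 hjn hp (u := w3) hrest3
    obtain ⟨g1', hg1', hrest1'⟩ := appW_split (l1 := [q, 2*n-q])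
      (l2 := [p,2*n-p,p,2*n-p,q,2*n-q]) t6
    obtain ⟨g2', hg2', hrest2'⟩ := appW_split (l1 := [p, 2*n-p])
      (l2 := [p,2*n-p,q,2*n-q]) hrest1'
    obtain ⟨g3', hg3', hrest3'⟩ := appW_split (l1 := [p, 2*n-p]) (l2 := [q,2*n-q]) hrest2'
    obtain ⟨w1', hw1e', hw1D'⟩ := Dstep_of_K hn hK hσb hσ hi1 hin hj1 hjn hq (u := u) hg1'
    have hw1w' : w1' = w' := Option.some.inj (hw1D'.symm.trans hDFq)
    rw [← hw1e'] at hg2'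
    obtain ⟨w2', hw2e', hw2D'⟩ := Dstep_of_K hn hK hσb hσ hi1 hin hj1 hjn hp (u := w1') hg2'
    rw [hw1w'] at hw2D'
    rw [← hw2e'] at hg3'
    obtain ⟨w3', hw3e', hw3D'⟩ := Dstep_of_K hn hK hσb hσ hi1 hin hj1 hjn hp (u := w2') hg3'
    rw [← hw3e'] at hrest3'
    obtain ⟨w4', hw4e', hw4D'⟩ := Dstep_of_K hn hK hσb hσ hi1 hin hj1 hjn hq (u := w3') hrest3'
    have hfinal : w4' = w4 := Subtype.ext (Subtype.ext (by rw [hw4e, hw4e']))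
    refine ⟨w4, ?_, ?_⟩
    · rw [hDFp]
      simp only [Option.bind_some]
      rw [hw2D]
      simp only [Option.bind_some]
      rw [hw3D]
      simp only [Option.bind_some]
      exact hw4D
    · rw [hDFq]
      simp only [Option.bind_some]
      rw [hw2D']
      simp only [Option.bind_some]
      rw [hw3D']
      simp only [Option.bind_some]
      rw [hfinal] at hw4D'
      exact hw4D'
  · -- second (dual) Verma clause
    intro u u' w hDFp hDFq hlab1 hlab2
    rcases Option.bind_eq_some_iff.mp ((DF_iff hi1 hin hj1 hjn hp).mp hDFp) with ⟨x1, hx1, hx1'⟩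
    rcases Option.bind_eq_some_iff.mp ((DF_iff hi1 hin hj1 hjn hq).mp hDFq) with ⟨y1, hy1, hy1'⟩
    rw [Dh_eq hn hK hσb hσ hi1 hin hj1 hjn hq, Dh_eq hn hK hσb hσ hi1 hin hj1 hjn hq] at hlab1
    rw [Dh_eq hn hK hσb hσ hi1 hin hj1 hjn hp, Dh_eq hn hK hσb hσ hi1 hin hj1 hjn hp] at hlab2
    -- preimages of w in K along p and q
    obtain ⟨xp, hxpa, hxpb⟩ := shuffle hK Rp Rp' Fpp' hx1 hx1'
    obtain ⟨yq, hyqa, hyqb⟩ := shuffle hK Rq Rq' Fqq' hy1 hy1'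
    have labP : K.h q w.1.1 = K.h q xp := by
      have := (far_ht hK Rp' Rq Fp'q hxpa).1
      omega
    have labQ : K.h p w.1.1 = K.h p yq := by
      have := (far_ht hK Rq' Rp Fq'p hyqa).1
      omega
    obtain ⟨Z, hI1, hI2⟩ := A4K.2 xp yq w.1.1 hxpb hyqb labP labQ
    -- decompose the two inverse chains
    rcases Option.bind_eq_some_iff.mp hI1 with ⟨a3, hA3, hZi⟩
    rcases Option.bind_eq_some_iff.mp hA3 with ⟨a2, hA2, ha3i⟩
    rcases Option.bind_eq_some_iff.mp hA2 with ⟨a1, ha1i, ha2i⟩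
    have Fa1 : K.F p a1 = some w.1.1 := (Finv_eq_iff hinjK).mp ha1i
    have Fa2 : K.F q a2 = some a1 := (Finv_eq_iff hinjK).mp ha2i
    have Fa3 : K.F q a3 = some a2 := (Finv_eq_iff hinjK).mp ha3i
    have FZ : K.F p Z = some a3 := (Finv_eq_iff hinjK).mp hZi
    rcases Option.bind_eq_some_iff.mp hI2 with ⟨b3, hB3, hZi2⟩
    rcases Option.bind_eq_some_iff.mp hB3 with ⟨b2, hB2, hb3i⟩
    rcases Option.bind_eq_some_iff.mp hB2 with ⟨b1, hb1i, hb2i⟩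
    have Fb1 : K.F q b1 = some w.1.1 := (Finv_eq_iff hinjK).mp hb1i
    have Fb2 : K.F p b2 = some b1 := (Finv_eq_iff hinjK).mp hb2i
    have Fb3 : K.F p b3 = some b2 := (Finv_eq_iff hinjK).mp hb3i
    have FZ2 : K.F q Z = some b3 := (Finv_eq_iff hinjK).mp hZi2
    -- t of primed colors at Z
    have htp'Z : 1 ≤ K.t (2*n-p) Z := by
      have i1 := (far_ht hK Rp Rp' Fpp' FZ).2
      have i2 := (far_ht hK Rq Rp' Fqp' Fa3).2
      have i3 := (far_ht hK Rq Rp' Fqp' Fa2).2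
      have i4 := (far_ht hK Rp Rp' Fpp' Fa1).2
      have i5 : K.t (2*n-p) w.1.1 = K.t (2*n-p) x1 + 1 := t_step hfin hinjK hacyc hx1'
      omega
    have htq'Z : 1 ≤ K.t (2*n-q) Z := by
      have i1 := (far_ht hK Rp Rq' Fpq' FZ).2
      have i2 := (far_ht hK Rq Rq' Fqq' Fa3).2
      have i3 := (far_ht hK Rq Rq' Fqq' Fa2).2
      have i4 := (far_ht hK Rp Rq' Fpq' Fa1).2
      have i5 : K.t (2*n-q) w.1.1 = K.t (2*n-q) y1 + 1 := t_step hfin hinjK hacyc hy1'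
      omega
    obtain ⟨xz, hxz⟩ := (t_pos_iff hfin hacyc).mp htp'Z
    obtain ⟨yz, hyz⟩ := (t_pos_iff hfin hacyc).mp htq'Z
    -- labels for the primed dual Verma at Z
    have hq'Z : K.h (2*n-q) Z = K.h q u.1.1 := by
      have i1 := (far_ht hK Rp Rq' Fpq' FZ).1
      have i2 := (far_ht hK Rq Rq' Fqq' Fa3).1
      have i3 := (far_ht hK Rq Rq' Fqq' Fa2).1
      have i4 := (far_ht hK Rp Rq' Fpq' Fa1).1
      have i5 := h_mirror hσb hσ w.1.2 q
      omega
    have hp'Z : K.h (2*n-p) Z = K.h p u'.1.1 := by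
      have i1 := (far_ht hK Rp Rp' Fpp' FZ).1
      have i2 := (far_ht hK Rq Rp' Fqp' Fa3).1
      have i3 := (far_ht hK Rq Rp' Fqp' Fa2).1
      have i4 := (far_ht hK Rp Rp' Fpp' Fa1).1
      have i5 := h_mirror hσb hσ w.1.2 p
      omega
    obtain ⟨c3, hc3a, hc3b⟩ := shuffle hK Rp' Rp Fp'p hxz FZ
    obtain ⟨c2, hc2a, hc2b⟩ := shuffle hK Rp' Rq Fp'q hc3b Fa3
    obtain ⟨c1, hc1a, hc1b⟩ := shuffle hK Rp' Rq Fp'q hc2b Fa2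
    obtain ⟨c0, hc0a, hc0b⟩ := shuffle hK Rp' Rp Fp'p hc1b Fa1
    have hc0x1 : c0 = x1 := hinjK (2*n-p) c0 x1 w.1.1 hc0b hx1'
    have labP' : K.h (2*n-q) Z = K.h (2*n-q) xz := by
      have i1 := (far_ht hK Rp Rq' Fpq' hc3a).1
      have i2 := (far_ht hK Rq Rq' Fqq' hc2a).1
      have i3 := (far_ht hK Rq Rq' Fqq' hc1a).1
      have i4 := (far_ht hK Rp Rq' Fpq' hc0a).1
      have i5 : K.h (2*n-q) x1 = K.h (2*n-q) u.1.1 := (far_ht hK Rp Rq' Fpq' hx1).1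
      have i6 := h_mirror hσb hσ u.1.2 q
      rw [hc0x1] at i4
      omega
    obtain ⟨d3, hd3a, hd3b⟩ := shuffle hK Rq' Rq Fq'q hyz FZ2
    obtain ⟨d2, hd2a, hd2b⟩ := shuffle hK Rq' Rp Fq'p hd3b Fb3
    obtain ⟨d1, hd1a, hd1b⟩ := shuffle hK Rq' Rp Fq'p hd2b Fb2
    obtain ⟨d0, hd0a, hd0b⟩ := shuffle hK Rq' Rq Fq'q hd1b Fb1
    have hd0y1 : d0 = y1 := hinjK (2*n-q) d0 y1 w.1.1 hd0b hy1'
    have labQ' : K.h (2*n-p) Z = K.h (2*n-p) yz := by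
      have i1 := (far_ht hK Rq Rp' Fqp' hd3a).1
      have i2 := (far_ht hK Rp Rp' Fpp' hd2a).1
      have i3 := (far_ht hK Rp Rp' Fpp' hd1a).1
      have i4 := (far_ht hK Rq Rp' Fqp' hd0a).1
      have i5 : K.h (2*n-p) y1 = K.h (2*n-p) u'.1.1 := (far_ht hK Rq Rp' Fqp' hy1).1
      have i6 := h_mirror hσb hσ u'.1.2 p
      rw [hd0y1] at i4
      omega
    obtain ⟨ZZ, hQ1, hQ2⟩ := A4K'.2 xz yz Z hxz hyz labP' labQ'
    -- the two full inverse words at w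
    have IT1 : appW K.Finv ([p,q,q,p] ++ [2*n-p,2*n-q,2*n-q,2*n-p]) (some w.1.1) =
        some ZZ := by
      rw [appW_append]
      have h1 : appW K.Finv [p,q,q,p] (some w.1.1) = some Z := hI1
      rw [h1]
      exact hQ1
    have IT2 : appW K.Finv ([q,p,p,q] ++ [2*n-q,2*n-p,2*n-p,2*n-q]) (some w.1.1) =
        some ZZ := by
      rw [appW_append]
      have h1 : appW K.Finv [q,p,p,q] (some w.1.1) = some Z := hI2
      rw [h1]
      exact hQ2
    -- reorder the first word
    have u1 := swap_word (DA4swapInv hK Rp Rp' Fpp') [p,q,q] [2*n-q,2*n-q,2*n-p] IT1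
    have u2 := swap_word (DA4swapInv hK Rq Rp' Fqp') [p,q] [p,2*n-q,2*n-q,2*n-p] u1
    have u3 := swap_word (DA4swapInv hK Rq Rp' Fqp') [p] [q,p,2*n-q,2*n-q,2*n-p] u2
    have u4 := swap_word (DA4swapInv hK Rp Rp' Fpp') [] [q,q,p,2*n-q,2*n-q,2*n-p] u3
    have u5 := swap_word (DA4swapInv hK Rp Rq' Fpq') [2*n-p,p,q,q] [2*n-q,2*n-p] u4
    have u6 := swap_word (DA4swapInv hK Rq Rq' Fqq') [2*n-p,p,q] [p,2*n-q,2*n-p] u5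
    have u7 := swap_word (DA4swapInv hK Rq Rq' Fqq') [2*n-p,p] [q,p,2*n-q,2*n-p] u6
    have u8 := swap_word (DA4swapInv hK Rp Rq' Fpq') [2*n-p,p,2*n-q,q,q] [2*n-p] u7
    have u9 := swap_word (DA4swapInv hK Rq Rq' Fqq') [2*n-p,p,2*n-q,q] [p,2*n-p] u8
    have u10 := swap_word (DA4swapInv hK Rp Rp' Fpp') [2*n-p,p,2*n-q,q,2*n-q,q] [] u9
    -- reorder the second word
    have v1 := swap_word (DA4swapInv hK Rq Rq' Fqq') [q,p,p] [2*n-p,2*n-p,2*n-q] IT2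
    have v2 := swap_word (DA4swapInv hK Rp Rq' Fpq') [q,p] [q,2*n-p,2*n-p,2*n-q] v1
    have v3 := swap_word (DA4swapInv hK Rp Rq' Fpq') [q] [p,q,2*n-p,2*n-p,2*n-q] v2
    have v4 := swap_word (DA4swapInv hK Rq Rq' Fqq') [] [p,p,q,2*n-p,2*n-p,2*n-q] v3
    have v5 := swap_word (DA4swapInv hK Rq Rp' Fqp') [2*n-q,q,p,p] [2*n-p,2*n-q] v4
    have v6 := swap_word (DA4swapInv hK Rp Rp' Fpp') [2*n-q,q,p] [q,2*n-p,2*n-q] v5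
    have v7 := swap_word (DA4swapInv hK Rp Rp' Fpp') [2*n-q,q] [p,q,2*n-p,2*n-q] v6
    have v8 := swap_word (DA4swapInv hK Rq Rp' Fqp') [2*n-q,q,2*n-p,p,p] [2*n-q] v7
    have v9 := swap_word (DA4swapInv hK Rp Rp' Fpp') [2*n-q,q,2*n-p,p] [q,2*n-q] v8
    have v10 := swap_word (DA4swapInv hK Rq Rq' Fqq') [2*n-q,q,2*n-p,p,2*n-p,p] [] v9
    -- convert the first word to a D-chain
    obtain ⟨g1, hg1, hrest1⟩ := appW_split (l1 := [2*n-p, p])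
      (l2 := [2*n-q,q,2*n-q,q,2*n-p,p]) u10
    obtain ⟨g2, hg2, hrest2⟩ := appW_split (l1 := [2*n-q, q])
      (l2 := [2*n-q,q,2*n-p,p]) hrest1
    obtain ⟨g3, hg3, hrest3⟩ := appW_split (l1 := [2*n-q, q]) (l2 := [2*n-p,p]) hrest2
    obtain ⟨W1, hW1e, hW1D⟩ := Dbackinv hn hK hσb hσ hi1 hin hj1 hjn hp (x := w) hg1
    rw [← hW1e] at hg2
    obtain ⟨W2, hW2e, hW2D⟩ := Dbackinv hn hK hσb hσ hi1 hin hj1 hjn hq (x := W1) hg2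
    rw [← hW2e] at hg3
    obtain ⟨W3, hW3e, hW3D⟩ := Dbackinv hn hK hσb hσ hi1 hin hj1 hjn hq (x := W2) hg3
    rw [← hW3e] at hrest3
    obtain ⟨W4, hW4e, hW4D⟩ := Dbackinv hn hK hσb hσ hi1 hin hj1 hjn hp (x := W3) hrest3
    -- convert the second word to a D-chain
    obtain ⟨g1', hg1', hrest1'⟩ := appW_split (l1 := [2*n-q, q])
      (l2 := [2*n-p,p,2*n-p,p,2*n-q,q]) v10
    obtain ⟨g2', hg2', hrest2'⟩ := appW_split (l1 := [2*n-p, p])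
      (l2 := [2*n-p,p,2*n-q,q]) hrest1'
    obtain ⟨g3', hg3', hrest3'⟩ := appW_split (l1 := [2*n-p, p]) (l2 := [2*n-q,q]) hrest2'
    obtain ⟨W1', hW1e', hW1D'⟩ := Dbackinv hn hK hσb hσ hi1 hin hj1 hjn hq (x := w) hg1'
    rw [← hW1e'] at hg2'
    obtain ⟨W2', hW2e', hW2D'⟩ := Dbackinv hn hK hσb hσ hi1 hin hj1 hjn hp (x := W1') hg2'
    rw [← hW2e'] at hg3'
    obtain ⟨W3', hW3e', hW3D'⟩ := Dbackinv hn hK hσb hσ hi1 hin hj1 hjn hp (x := W2') hg3'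
    rw [← hW3e'] at hrest3'
    obtain ⟨W4', hW4e', hW4D'⟩ := Dbackinv hn hK hσb hσ hi1 hin hj1 hjn hq (x := W3') hrest3'
    have hfinal : W4' = W4 := Subtype.ext (Subtype.ext (by rw [hW4e, hW4e']))
    refine ⟨W4, ?_, ?_⟩
    · rw [hW1D]
      simp only [Option.bind_some]
      rw [hW2D]
      simp only [Option.bind_some]
      rw [hW3D]
      simp only [Option.bind_some]
      exact hW4D
    · rw [hW1D']
      simp only [Option.bind_some]
      rw [hW2D']
      simp only [Option.bind_some]
      rw [hW3D']
      simp only [Option.bind_some]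
      rw [hfinal] at hW4D'
      exact hW4D'


end DLayer

/-- for colors `i, j < n` with `|i - j| = 1`, every connected component of
the 2-colored subgraph of the symmetric extract `B` with colors `ibar, jbar` is an
`A_2`-crystal. -/
theorem extract_neighboring_components_are_A2
    (n : ℕ) (hn : 2 ≤ n) (K : PreGraph) (hK : IsACrystal (2 * n - 1) K)
    (s : K.V) (hs : IsSource K s)
    (c : ℕ → ℕ) (hc : ∀ i, 1 ≤ i → i ≤ 2 * n - 1 → K.h i s = c i)
    (hsym : ∀ i, 1 ≤ i → i ≤ 2 * n - 1 → c i = c (2 * n - i))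
    (σ : K.V → K.V) (hσb : Function.Bijective σ)
    (hσ : ∀ (i : ℕ) (u v : K.V), K.F i u = some v ↔ K.F (2 * n - i) (σ u) = some (σ v))
    (i j : ℕ) (hi1 : 1 ≤ i) (hin : i < n) (hj1 : 1 ≤ j) (hjn : j < n)
    (hij : Neighb i j) :
    ∀ v : (extractB K n σ).V,
      IsCrystalOn ((extractB K n σ).sub {i, j} v) {i, j} := by
  intro v
  have hfinK := hK.1.1
  have hinjK := hK.1.2.2.1
  have hacycK := hK.1.2.2.2
  have hijne : i ≠ j := by rcases hij with h | h <;> omega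
  constructor
  · -- IsColored
    refine ⟨?_, ?_, ?_, ?_⟩
    · haveI := hfinK
      haveI : Finite (extractB K n σ).V := Subtype.finite
      exact Subtype.finite
    · intro p hp u
      exact subF_none hp u
    · intro p u u' x h1 h2
      by_cases hp : p ∈ ({i, j} : Set ℕ)
      · exact Dinj hn hK hσb hσ hi1 hin hj1 hjn hp h1 h2
      · exfalso
        rw [subF_none hp u] at h1
        exact absurd h1 (by simp)
    · intro p u k hk hiter
      by_cases hp : p ∈ ({i, j} : Set ℕ)
      · have key : ∀ (m : ℕ) (a b : ((extractB K n σ).sub {i,j} v).V),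
            optIter (((extractB K n σ).sub {i,j} v).F p) m a = some b →
            K.h p a.1.1 = K.h p b.1.1 + m := by
          intro m
          induction m with
          | zero => intro a b h; injection h with h; rw [h]; omega
          | succ m ih =>
            intro a b h
            rcases Option.bind_eq_some_iff.mp h with ⟨w, hw1, hw2⟩
            have := Dstep_h hn hK hσb hσ hi1 hin hj1 hjn hp hw1
            have := ih w b hw2
            omega
        have := key k u u hiter
        omega
      · obtain ⟨m, rfl⟩ : ∃ m, k = m + 1 := ⟨k - 1, by omega⟩
        have hnone : ((extractB K n σ).sub {i,j} v).F p u = none := subF_none hp u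
        have : optIter (((extractB K n σ).sub {i,j} v).F p) (m+1) u = none := by
          show (((extractB K n σ).sub {i,j} v).F p u).bind _ = none
          rw [hnone]
          rfl
        rw [this] at hiter
        exact absurd hiter (by simp)
  constructor
  · -- Connected
    have key : ∀ (b : (extractB K n σ).V) (hb : inComp (extractB K n σ) {i,j} v b),
        Relation.ReflTransGen ((extractB K n σ).sub {i,j} v).Step
          ⟨v, Relation.ReflTransGen.refl⟩ ⟨b, hb⟩ := by
      intro b hb
      induction hb with
      | refl => exact Relation.ReflTransGen.refl
      | @tail c b hvc hcb ih =>
        refine Relation.ReflTransGen.tail ih ?_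
        obtain ⟨p, hpI, hor⟩ := hcb
        rcases hor with hcb' | hbc'
        · exact ⟨p, Or.inl ((subF_iff hpI (u := ⟨c, hvc⟩)
            (w := ⟨b, Relation.ReflTransGen.tail hvc ⟨p, hpI, Or.inl hcb'⟩⟩)).mpr hcb')⟩
        · exact ⟨p, Or.inr ((subF_iff hpI
            (u := ⟨b, Relation.ReflTransGen.tail hvc ⟨p, hpI, Or.inr hbc'⟩⟩)
            (w := ⟨c, hvc⟩)).mpr hbc')⟩
    have hsymm : Symmetric ((extractB K n σ).sub {i,j} v).Step := by
      rintro a b ⟨p, h | h⟩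
      · exact ⟨p, Or.inr h⟩
      · exact ⟨p, Or.inl h⟩
    intro a b
    have ha := key a.1 a.2
    have hb := key b.1 b.2
    exact Relation.ReflTransGen.trans
      ((@Relation.ReflTransGen.symmetric _ _ ⟨fun _ _ h => hsymm h⟩).symm _ _ ha) hb
  refine ⟨?_, ?_, ?_⟩
  · -- A2
    intro p hp q hq hne
    have hnb : Neighb p q := by
      rcases Set.mem_insert_iff.mp hp with rfl | hp' <;>
        rcases Set.mem_insert_iff.mp hq with rfl | hq'
      · exact absurd rfl hne
      · rw [Set.mem_singleton_iff] at hq'; subst hq'; exact hij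
      · rw [Set.mem_singleton_iff] at hp'; subst hp'
        rcases hij with h | h
        · exact Or.inr h
        · exact Or.inl h
      · rw [Set.mem_singleton_iff] at hp' hq'; subst hp'; subst hq'
        exact absurd rfl hne
    exact DA2 hn hK hσb hσ hi1 hin hj1 hjn hp hq hnb
  · -- A3 and A4
    intro p hp q hq hnb
    exact ⟨DA3 hn hK hσb hσ hi1 hin hj1 hjn hp hq hnb,
           DA4 hn hK hσb hσ hi1 hin hj1 hjn hp hq hnb⟩
  · -- A5 vacuous
    intro p hp q hq hfar
    exfalso
    have h1 := pair_range hi1 hin hj1 hjn hp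
    have h2 := pair_range hi1 hin hj1 hjn hq
    rcases Set.mem_insert_iff.mp hp with rfl | hp' <;>
      rcases Set.mem_insert_iff.mp hq with rfl | hq'
    · rcases hfar with h | h <;> omega
    · rw [Set.mem_singleton_iff] at hq'; subst hq'
      rcases hfar with h | h <;> rcases hij with h' | h' <;> omega
    · rw [Set.mem_singleton_iff] at hp'; subst hp'
      rcases hfar with h | h <;> rcases hij with h' | h' <;> omega
    · rw [Set.mem_singleton_iff] at hp' hq'; subst hp'; subst hq'
      rcases hfar with h | h <;> omega
end
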